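/- arXiv:0705.1794 — 7 statements merged into one kernel-verified Lean document; each statement's English description precedes it below -/
import Mathlib

section
/- Let (Ω, F, P) be a probability space with a filtration (F_n)_{n∈ℕ}, and let (X_n), (β_n), (ξ_n), (ζ_n) be sequences of nonnegative, adapted random variables with each X_n integrable, such that for every n ≥ 1, E[X_n | F_{n−1}] ≤ X_{n−1}(1 + β_{n−1}) + ξ_{n−1} − ζ_{n−1} almost surely. Then, almost surely on the event {Σ_{n≥0} β_n < ∞} ∩ {Σ_{n≥0} ξ_n < ∞}, the sequence (X_n) converges to a finite limit and Σ_{n≥0} ζ_n < ∞. -/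
open MeasureTheory Filter Topology Finset

namespace RSaux

/-- Partial product `∏_{k<n} (1 + b k)`. -/
noncomputable def P (b : ℕ → ℝ) (n : ℕ) : ℝ := ∏ k ∈ Finset.range n, (1 + b k)

variable {b u z x : ℕ → ℝ}

lemma one_le_P (hb : ∀ k, 0 ≤ b k) (n : ℕ) : 1 ≤ P b n := by
  unfold P
  calc (1:ℝ) = ∏ _k ∈ Finset.range n, (1:ℝ) := by simp
    _ ≤ ∏ k ∈ Finset.range n, (1 + b k) :=
        Finset.prod_le_prod (fun k _ => zero_le_one) (fun k _ => by linarith [hb k])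

lemma P_pos (hb : ∀ k, 0 ≤ b k) (n : ℕ) : 0 < P b n :=
  lt_of_lt_of_le one_pos (one_le_P hb n)

lemma P_succ (b : ℕ → ℝ) (n : ℕ) : P b (n + 1) = P b n * (1 + b n) :=
  Finset.prod_range_succ _ _

lemma P_mono (hb : ∀ k, 0 ≤ b k) : Monotone (P b) := by
  refine monotone_nat_of_le_succ fun n => ?_
  rw [P_succ]
  nlinarith [P_pos hb n, hb n]

lemma P_le_exp (hb : ∀ k, 0 ≤ b k) {M : ℝ} {n : ℕ}
    (h : ∑ k ∈ Finset.range n, b k ≤ M) : P b n ≤ Real.exp M := by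
  calc P b n ≤ ∏ k ∈ Finset.range n, Real.exp (b k) := by
        refine Finset.prod_le_prod (fun k _ => by linarith [hb k]) fun k _ => ?_
        linarith [Real.add_one_le_exp (b k)]
    _ = Real.exp (∑ k ∈ Finset.range n, b k) := (Real.exp_sum _ _).symm
    _ ≤ Real.exp M := Real.exp_le_exp.2 h

/-- Telescoping identity. -/
lemma teles (hb : ∀ k, 0 ≤ b k) (u z x : ℕ → ℝ) (n : ℕ) :
    x 0 + ∑ k ∈ Finset.range n,
        (P b (k + 1))⁻¹ * (x (k + 1) - (x k * (1 + b k) + u k - z k))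
      = x n / P b n + ∑ k ∈ Finset.range n, (z k - u k) / P b (k + 1) := by
  induction n with
  | zero => simp [P]
  | succ n ih =>
    rw [Finset.sum_range_succ, ← add_assoc, ih, Finset.sum_range_succ]
    have h1 : P b (n+1) ≠ 0 := (P_pos hb (n+1)).ne'
    have h2 : P b n ≠ 0 := (P_pos hb n).ne'
    have h3 : x n / P b n = x n * (1 + b n) / P b (n+1) := by
      rw [P_succ, div_eq_div_iff h2 (by rw [← P_succ]; exact h1)]
      ring
    rw [h3]
    field_simp
    ring

lemma lower_aux (hb : ∀ k, 0 ≤ b k) (hu : ∀ k, 0 ≤ u k) (hz : ∀ k, 0 ≤ z k)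
    (hx : ∀ k, 0 ≤ x k) {M : ℝ} {n : ℕ}
    (hun : ∑ k ∈ Finset.range n, u k ≤ M) :
    -M ≤ x n / P b n + ∑ k ∈ Finset.range n, (z k - u k) / P b (k + 1) := by
  have h1 : ∀ k, -(u k) ≤ (z k - u k) / P b (k + 1) := by
    intro k
    have hp1 := one_le_P hb (k+1)
    have hpp := P_pos hb (k+1)
    have hds : u k / P b (k+1) ≤ u k := div_le_self (hu k) hp1
    have : -(u k) ≤ -(u k) / P b (k+1) := by rw [neg_div]; linarith
    refine this.trans ?_
    gcongr
    linarith [hz k]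
  have h2 : ∑ k ∈ Finset.range n, -(u k) ≤
      ∑ k ∈ Finset.range n, (z k - u k) / P b (k + 1) :=
    Finset.sum_le_sum fun k _ => h1 k
  have h3 : 0 ≤ x n / P b n := div_nonneg (hx n) (P_pos hb n).le
  have h4 : ∑ k ∈ Finset.range n, -(u k) = -∑ k ∈ Finset.range n, u k := by
    simp
  linarith

end RSaux

namespace RSaux2
open RSaux

variable {b u z x : ℕ → ℝ}

/-- Lower bound for the stopped process. -/
lemma lower (hb : ∀ k, 0 ≤ b k) (hu : ∀ k, 0 ≤ u k) (hz : ∀ k, 0 ≤ z k)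
    (hx : ∀ k, 0 ≤ x k) (p : ℕ → Prop) (co : ℕ → ℝ) {M : ℝ} (hM : 0 ≤ M)
    (hco1 : ∀ k, p k → co k = (P b (k + 1))⁻¹) (hco0 : ∀ k, ¬ p k → co k = 0)
    (hmono : ∀ k, p (k + 1) → p k)
    (hpu : ∀ k, p k → ∑ j ∈ Finset.range (k + 1), u j ≤ M) (n : ℕ) :
    -M ≤ x 0 + ∑ k ∈ Finset.range n,
        co k * (x (k + 1) - (x k * (1 + b k) + u k - z k)) := by
  have key : ∀ m : ℕ, (∀ k < m, p k) →
      -M ≤ x 0 + ∑ k ∈ Finset.range m,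
        co k * (x (k + 1) - (x k * (1 + b k) + u k - z k)) := by
    intro m hall
    have hsum : ∑ k ∈ Finset.range m,
        co k * (x (k + 1) - (x k * (1 + b k) + u k - z k))
        = ∑ k ∈ Finset.range m,
        (P b (k + 1))⁻¹ * (x (k + 1) - (x k * (1 + b k) + u k - z k)) := by
      refine Finset.sum_congr rfl fun k hk => ?_
      rw [hco1 k (hall k (Finset.mem_range.1 hk))]
    rw [hsum, teles hb u z x m]
    have hum : ∑ k ∈ Finset.range m, u k ≤ M := by
      cases m with
      | zero => simpa using hM
      | succ m => exact hpu m (hall m (Nat.lt_succ_self m))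
    exact lower_aux hb hu hz hx hum
  by_cases hall : ∀ k < n, p k
  · exact key n hall
  · push_neg at hall
    obtain ⟨k₀, hk₀n, hk₀⟩ := hall
    have hex : ∃ k, ¬ p k := ⟨k₀, hk₀⟩
    classical
    set j := Nat.find hex with hj
    have hjp : ¬ p j := Nat.find_spec hex
    have hjlt : j < n := lt_of_le_of_lt (Nat.find_le hk₀) hk₀n
    have hbelow : ∀ k < j, p k := fun k hk => by
      by_contra hc; exact absurd (Nat.find_le hc) (not_le.2 hk)
    have habove : ∀ k, j ≤ k → ¬ p k := by
      intro k hk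
      induction k with
      | zero => exact Nat.le_zero.1 hk ▸ hjp
      | succ k ih =>
        rcases Nat.lt_or_ge j (k+1) with h | h
        · exact fun hpk => ih (Nat.lt_succ_iff.1 h) (hmono k hpk)
        · exact Nat.le_antisymm hk h ▸ hjp
    have hsum : ∑ k ∈ Finset.range n,
        co k * (x (k + 1) - (x k * (1 + b k) + u k - z k))
        = ∑ k ∈ Finset.range j,
        co k * (x (k + 1) - (x k * (1 + b k) + u k - z k)) := by
      refine (Finset.sum_subset (Finset.range_subset_range.2 hjlt.le) fun k _ hk => ?_).symm
      rw [hco0 k (habove k (le_of_not_gt fun h => hk (Finset.mem_range.2 h))), zero_mul]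
    rw [hsum]
    exact key j hbelow

/-- Deterministic convergence part. -/
lemma det_main (hb : ∀ k, 0 ≤ b k) (hu : ∀ k, 0 ≤ u k) (hz : ∀ k, 0 ≤ z k)
    (hx : ∀ k, 0 ≤ x k) {M : ℝ}
    (hbM : ∀ n, ∑ k ∈ Finset.range n, b k ≤ M)
    (huM : ∀ n, ∑ k ∈ Finset.range n, u k ≤ M) {s : ℝ}
    (hS : Tendsto (fun n => x n / P b n +
        ∑ k ∈ Finset.range n, (z k - u k) / P b (k + 1)) atTop (𝓝 s)) :
    (∃ l : ℝ, Tendsto x atTop (𝓝 l)) ∧ Summable z := by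
  have hppos : ∀ n, 0 < P b n := P_pos hb
  have hp1 : ∀ n, 1 ≤ P b n := one_le_P hb
  have hpexp : ∀ n, P b n ≤ Real.exp M := fun n => P_le_exp hb (hbM n)
  -- summability of u k / P (k+1)
  have hsumu : Summable fun k => u k / P b (k + 1) := by
    refine summable_of_sum_range_le (c := M) (fun k => div_nonneg (hu k) (hppos _).le) fun n => ?_
    calc ∑ k ∈ Finset.range n, u k / P b (k + 1)
        ≤ ∑ k ∈ Finset.range n, u k :=
          Finset.sum_le_sum fun k _ => div_le_self (hu k) (hp1 _)
      _ ≤ M := huM n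
  have hPt := hsumu.hasSum.tendsto_sum_nat
  -- T n := x n / P n + ∑ z/P  converges
  have hT : Tendsto (fun n => x n / P b n +
      ∑ k ∈ Finset.range n, z k / P b (k + 1)) atTop
      (𝓝 (s + ∑' k, u k / P b (k + 1))) := by
    have := hS.add hPt
    refine this.congr fun n => ?_
    rw [add_assoc, ← Finset.sum_add_distrib]
    congr 1
    refine Finset.sum_congr rfl fun k _ => ?_
    rw [← add_div, sub_add_cancel]
  -- Q summable
  obtain ⟨C, hC⟩ := hT.bddAbove_range
  have hsumz' : Summable fun k => z k / P b (k + 1) := by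
    refine summable_of_sum_range_le (c := C) (fun k => div_nonneg (hz k) (hppos _).le) fun n => ?_
    have h1 : ∑ k ∈ Finset.range n, z k / P b (k + 1) ≤
        x n / P b n + ∑ k ∈ Finset.range n, z k / P b (k + 1) :=
      le_add_of_nonneg_left (div_nonneg (hx n) (hppos n).le)
    exact h1.trans (hC (Set.mem_range_self n))
  have hQt := hsumz'.hasSum.tendsto_sum_nat
  -- x n / P n converges
  have hxP : Tendsto (fun n => x n / P b n) atTop
      (𝓝 (s + ∑' k, u k / P b (k + 1) - ∑' k, z k / P b (k + 1))) := by
    have := hT.sub hQt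
    refine this.congr fun n => ?_
    simp
  -- P converges
  have hPmono := P_mono hb
  have hPbdd : BddAbove (Set.range (P b)) := ⟨Real.exp M, by rintro _ ⟨n, rfl⟩; exact hpexp n⟩
  have hPt2 : Tendsto (P b) atTop (𝓝 (⨆ n, P b n)) := tendsto_atTop_ciSup hPmono hPbdd
  have hPlim : 1 ≤ ⨆ n, P b n := by
    have := le_ciSup hPbdd 0
    exact (one_le_P hb 0).trans this
  constructor
  · refine ⟨(s + ∑' k, u k / P b (k + 1) - ∑' k, z k / P b (k + 1)) * ⨆ n, P b n, ?_⟩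
    have := hxP.mul hPt2
    refine this.congr fun n => ?_
    exact div_mul_cancel₀ _ (hppos n).ne'
  · refine Summable.of_nonneg_of_le hz (fun k => ?_) (hsumz'.mul_right (Real.exp M))
    calc z k = z k / P b (k + 1) * P b (k + 1) := (div_mul_cancel₀ _ (hppos _).ne').symm
      _ ≤ z k / P b (k + 1) * Real.exp M := by
          exact mul_le_mul_of_nonneg_left (hpexp _) (div_nonneg (hz k) (hppos _).le)

end RSaux2

section Core

open RSaux RSaux2

variable {Ω : Type*} {m : MeasurableSpace Ω} {μ : Measure Ω}

/-- The event that the partial sums of `β` and `ξ` up to time `n` are at most `M`. -/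
def rsA (β ξ : ℕ → Ω → ℝ) (M : ℝ) (n : ℕ) : Set Ω :=
  {ω | ∑ k ∈ Finset.range (n + 1), β k ω ≤ M ∧ ∑ k ∈ Finset.range (n + 1), ξ k ω ≤ M}

/-- The predictable multiplier used to stop the process. -/
noncomputable def rsC (β ξ : ℕ → Ω → ℝ) (M : ℝ) (n : ℕ) : Ω → ℝ :=
  (rsA β ξ M n).indicator fun ω => (∏ k ∈ Finset.range (n + 1), (1 + β k ω))⁻¹

/-- The stopped supermartingale. -/
noncomputable def rsS (X β ξ ζ : ℕ → Ω → ℝ) (M : ℝ) (n : ℕ) (ω : Ω) : ℝ :=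
  X 0 ω + ∑ k ∈ Finset.range n, rsC β ξ M k ω *
    (X (k + 1) ω - (X k ω * (1 + β k ω) + ξ k ω - ζ k ω))

theorem rs_core [IsProbabilityMeasure μ] (ℱ : Filtration ℕ m)
    (X β ξ ζ : ℕ → Ω → ℝ)
    (hXadp : Adapted ℱ X) (hβadp : Adapted ℱ β) (hξadp : Adapted ℱ ξ) (hζadp : Adapted ℱ ζ)
    (hX0 : ∀ n ω, 0 ≤ X n ω) (hβ0 : ∀ n ω, 0 ≤ β n ω)
    (hξ0 : ∀ n ω, 0 ≤ ξ n ω) (hζ0 : ∀ n ω, 0 ≤ ζ n ω)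
    (hXint : ∀ n, Integrable (X n) μ)
    (hcond : ∀ n : ℕ,
      μ[X (n + 1) | ℱ n] ≤ᵐ[μ] fun ω => X n ω * (1 + β n ω) + ξ n ω - ζ n ω)
    (M : ℕ) :
    ∀ᵐ ω ∂μ, ∃ s : ℝ, Tendsto (fun n => rsS X β ξ ζ (M : ℝ) n ω) atTop (𝓝 s) := by
  classical
  replace hXadp := hXadp.stronglyAdapted
  replace hβadp := hβadp.stronglyAdapted
  replace hξadp := hξadp.stronglyAdapted
  replace hζadp := hζadp.stronglyAdapted
  set A : ℕ → Set Ω := rsA β ξ (M : ℝ) with hA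
  set c : ℕ → Ω → ℝ := rsC β ξ (M : ℝ) with hc
  set S : ℕ → Ω → ℝ := rsS X β ξ ζ (M : ℝ) with hS
  have hM0 : (0 : ℝ) ≤ (M : ℝ) := Nat.cast_nonneg M
  -- measurability of the events
  have hsumβ : ∀ n, Measurable[ℱ n] fun ω => ∑ k ∈ Finset.range (n + 1), β k ω := by
    intro n
    refine Finset.measurable_sum _ fun k hk => ?_
    exact ((hβadp k).mono (ℱ.mono (Nat.lt_succ_iff.1 (Finset.mem_range.1 hk)))).measurable
  have hsumξ : ∀ n, Measurable[ℱ n] fun ω => ∑ k ∈ Finset.range (n + 1), ξ k ω := by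
    intro n
    refine Finset.measurable_sum _ fun k hk => ?_
    exact ((hξadp k).mono (ℱ.mono (Nat.lt_succ_iff.1 (Finset.mem_range.1 hk)))).measurable
  have hAmeas : ∀ n, MeasurableSet[ℱ n] (A n) := by
    intro n
    have : A n = {ω | ∑ k ∈ Finset.range (n + 1), β k ω ≤ (M : ℝ)} ∩
        {ω | ∑ k ∈ Finset.range (n + 1), ξ k ω ≤ (M : ℝ)} := rfl
    rw [this]
    exact (measurableSet_le (hsumβ n) measurable_const).inter
      (measurableSet_le (hsumξ n) measurable_const)
  have hprodmeas : ∀ n, Measurable[ℱ n] fun ω => ∏ k ∈ Finset.range (n + 1), (1 + β k ω) := by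
    intro n
    refine Finset.measurable_prod _ fun k hk => ?_
    exact measurable_const.add
      ((hβadp k).mono (ℱ.mono (Nat.lt_succ_iff.1 (Finset.mem_range.1 hk)))).measurable
  have hcsm : ∀ n, StronglyMeasurable[ℱ n] (c n) := by
    intro n
    exact (((hprodmeas n).inv).indicator (hAmeas n)).stronglyMeasurable
  -- pointwise bounds on c
  have hc0 : ∀ n ω, 0 ≤ c n ω := by
    intro n ω
    simp only [hc, rsC, Set.indicator_apply]
    split_ifs with h
    · exact inv_nonneg.2 (P_pos (b := fun k => β k ω) (fun k => hβ0 k ω) (n + 1)).le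
    · exact le_rfl
  have hc1 : ∀ n ω, c n ω ≤ 1 := by
    intro n ω
    simp only [hc, rsC, Set.indicator_apply]
    split_ifs with h
    · exact inv_le_one_of_one_le₀ (one_le_P (b := fun k => β k ω) (fun k => hβ0 k ω) (n + 1))
    · exact zero_le_one
  have hcabs : ∀ n ω, |c n ω| ≤ 1 := fun n ω =>
    abs_le.2 ⟨by linarith [hc0 n ω], hc1 n ω⟩
  -- if ω ∈ A n then β n ω ≤ M and ξ n ω ≤ M
  have hβA : ∀ n ω, ω ∈ A n → β n ω ≤ (M : ℝ) := by
    intro n ω hω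
    refine le_trans ?_ hω.1
    exact Finset.single_le_sum (fun k _ => hβ0 k ω) (Finset.self_mem_range_succ n)
  have hξA : ∀ n ω, ω ∈ A n → ξ n ω ≤ (M : ℝ) := by
    intro n ω hω
    refine le_trans ?_ hω.2
    exact Finset.single_le_sum (fun k _ => hξ0 k ω) (Finset.self_mem_range_succ n)
  -- a.e. bound on ζ
  have hζle : ∀ n, ∀ᵐ ω ∂μ, ζ n ω ≤ X n ω * (1 + β n ω) + ξ n ω := by
    intro n
    have h0 : (0 : Ω → ℝ) ≤ᵐ[μ] μ[X (n + 1) | ℱ n] :=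
      condExp_nonneg (Eventually.of_forall fun ω => hX0 (n + 1) ω)
    filter_upwards [hcond n, h0] with ω h1 h2
    have h2' : (0:ℝ) ≤ (μ[X (n + 1) | ℱ n]) ω := h2
    linarith [h2'.trans h1]
  -- integrability of the pieces
  have int1 : ∀ n, Integrable (fun ω => c n ω * X (n + 1) ω) μ := by
    intro n
    refine Integrable.mono' (hXint (n + 1)) ?_ ?_
    · exact (((hcsm n).mono (ℱ.le n)).measurable.mul
        ((hXadp (n + 1)).mono (ℱ.le (n + 1))).measurable).aestronglyMeasurable
    · refine Eventually.of_forall fun ω => ?_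
      rw [Real.norm_eq_abs, abs_mul]
      calc |c n ω| * |X (n + 1) ω| ≤ 1 * |X (n + 1) ω| :=
            mul_le_mul_of_nonneg_right (hcabs n ω) (abs_nonneg _)
        _ = X (n + 1) ω := by rw [one_mul, abs_of_nonneg (hX0 _ _)]
  have int2 : ∀ n, Integrable (fun ω => c n ω * (X n ω * (1 + β n ω))) μ := by
    intro n
    refine Integrable.mono' ((hXint n).const_mul (1 + (M : ℝ))) ?_ ?_
    · exact (((hcsm n).mono (ℱ.le n)).measurable.mul
        (((hXadp n).mono (ℱ.le n)).measurable.mul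
          (measurable_const.add ((hβadp n).mono (ℱ.le n)).measurable))).aestronglyMeasurable
    · refine Eventually.of_forall fun ω => ?_
      rw [Real.norm_eq_abs]
      simp only [hc, rsC, Set.indicator_apply]
      split_ifs with h
      · have hβM := hβA n ω h
        have h1 : (0:ℝ) ≤ (∏ k ∈ Finset.range (n + 1), (1 + β k ω))⁻¹ :=
          inv_nonneg.2 (P_pos (b := fun k => β k ω) (fun k => hβ0 k ω) (n + 1)).le
        have h2 : (∏ k ∈ Finset.range (n + 1), (1 + β k ω))⁻¹ ≤ 1 :=
          inv_le_one_of_one_le₀ (one_le_P (b := fun k => β k ω) (fun k => hβ0 k ω) (n + 1))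
        have h3 : 0 ≤ X n ω * (1 + β n ω) := by nlinarith [hX0 n ω, hβ0 n ω]
        rw [abs_of_nonneg (by nlinarith)]
        nlinarith [hX0 n ω, hβ0 n ω]
      · simp only [zero_mul, abs_zero]
        nlinarith [hX0 n ω]
  have int3 : ∀ n, Integrable (fun ω => c n ω * ξ n ω) μ := by
    intro n
    refine Integrable.mono' (integrable_const (M : ℝ)) ?_ ?_
    · exact (((hcsm n).mono (ℱ.le n)).measurable.mul
        ((hξadp n).mono (ℱ.le n)).measurable).aestronglyMeasurable
    · refine Eventually.of_forall fun ω => ?_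
      rw [Real.norm_eq_abs]
      simp only [hc, rsC, Set.indicator_apply]
      split_ifs with h
      · have hξM := hξA n ω h
        have h1 : (0:ℝ) ≤ (∏ k ∈ Finset.range (n + 1), (1 + β k ω))⁻¹ :=
          inv_nonneg.2 (P_pos (b := fun k => β k ω) (fun k => hβ0 k ω) (n + 1)).le
        have h2 : (∏ k ∈ Finset.range (n + 1), (1 + β k ω))⁻¹ ≤ 1 :=
          inv_le_one_of_one_le₀ (one_le_P (b := fun k => β k ω) (fun k => hβ0 k ω) (n + 1))
        rw [abs_of_nonneg (mul_nonneg h1 (hξ0 n ω))]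
        nlinarith [hξ0 n ω]
      · simpa using hM0
  have int4 : ∀ n, Integrable (fun ω => c n ω * ζ n ω) μ := by
    intro n
    refine Integrable.mono'
      (((hXint n).const_mul (1 + (M : ℝ))).add (integrable_const (M : ℝ))) ?_ ?_
    · exact (((hcsm n).mono (ℱ.le n)).measurable.mul
        ((hζadp n).mono (ℱ.le n)).measurable).aestronglyMeasurable
    · filter_upwards [hζle n] with ω hω
      simp only [Pi.add_apply]
      rw [Real.norm_eq_abs]
      simp only [hc, rsC, Set.indicator_apply]
      split_ifs with h
      · have hβM := hβA n ω h
        have hξM := hξA n ω h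
        have h1 : (0:ℝ) ≤ (∏ k ∈ Finset.range (n + 1), (1 + β k ω))⁻¹ :=
          inv_nonneg.2 (P_pos (b := fun k => β k ω) (fun k => hβ0 k ω) (n + 1)).le
        have h2 : (∏ k ∈ Finset.range (n + 1), (1 + β k ω))⁻¹ ≤ 1 :=
          inv_le_one_of_one_le₀ (one_le_P (b := fun k => β k ω) (fun k => hβ0 k ω) (n + 1))
        rw [abs_of_nonneg (mul_nonneg h1 (hζ0 n ω))]
        have hζb : ζ n ω ≤ (1 + (M : ℝ)) * X n ω + (M : ℝ) := by
          nlinarith [hX0 n ω, hβ0 n ω, hξ0 n ω]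
        nlinarith [hζ0 n ω, hX0 n ω]
      · simp only [zero_mul, abs_zero]
        nlinarith [hX0 n ω]
  -- integrability of increments and of S
  have hginc : ∀ n, (fun ω => c n ω * (X (n + 1) ω - (X n ω * (1 + β n ω) + ξ n ω - ζ n ω)))
      = fun ω => c n ω * X (n + 1) ω - c n ω * (X n ω * (1 + β n ω)) - c n ω * ξ n ω
        + c n ω * ζ n ω := by
    intro n; funext ω; ring
  have hincint : ∀ n,
      Integrable (fun ω => c n ω * (X (n + 1) ω - (X n ω * (1 + β n ω) + ξ n ω - ζ n ω))) μ := by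
    intro n
    rw [hginc n]
    exact (((int1 n).sub (int2 n)).sub (int3 n)).add (int4 n)
  have hSint : ∀ n, Integrable (S n) μ := by
    intro n
    have : S n = fun ω => X 0 ω + ∑ k ∈ Finset.range n, c k ω *
        (X (k + 1) ω - (X k ω * (1 + β k ω) + ξ k ω - ζ k ω)) := rfl
    rw [this]
    exact (hXint 0).add (integrable_finset_sum _ fun k _ => hincint k)
  -- adaptedness of S
  have hSadp : StronglyAdapted ℱ S := by
    intro n
    have : S n = fun ω => X 0 ω + ∑ k ∈ Finset.range n, c k ω *
        (X (k + 1) ω - (X k ω * (1 + β k ω) + ξ k ω - ζ k ω)) := rfl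
    rw [this]
    apply Measurable.stronglyMeasurable
    refine Measurable.add ?_ ?_
    · exact ((hXadp 0).mono (ℱ.mono (Nat.zero_le n))).measurable
    · refine Finset.measurable_sum _ fun k hk => ?_
      have hkn : k < n := Finset.mem_range.1 hk
      have hck : Measurable[ℱ n] (c k) :=
        ((hcsm k).mono (ℱ.mono hkn.le)).measurable
      have hX1 : Measurable[ℱ n] (X (k + 1)) :=
        ((hXadp (k + 1)).mono (ℱ.mono hkn)).measurable
      have hXk : Measurable[ℱ n] (X k) := ((hXadp k).mono (ℱ.mono hkn.le)).measurable
      have hβk : Measurable[ℱ n] (β k) := ((hβadp k).mono (ℱ.mono hkn.le)).measurable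
      have hξk : Measurable[ℱ n] (ξ k) := ((hξadp k).mono (ℱ.mono hkn.le)).measurable
      have hζk : Measurable[ℱ n] (ζ k) := ((hζadp k).mono (ℱ.mono hkn.le)).measurable
      exact hck.mul (hX1.sub (((hXk.mul (measurable_const.add hβk)).add hξk).sub hζk))
  -- the supermartingale step
  have hstep : ∀ n, μ[S (n + 1) | ℱ n] ≤ᵐ[μ] S n := by
    intro n
    set g : Ω → ℝ := fun ω => X n ω * (1 + β n ω) + ξ n ω - ζ n ω with hg
    have hgsm : StronglyMeasurable[ℱ n] g := by
      apply Measurable.stronglyMeasurable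
      exact (((hXadp n).measurable.mul
        (measurable_const.add (hβadp n).measurable)).add
        (hξadp n).measurable).sub (hζadp n).measurable
    have hcgint : Integrable (fun ω => c n ω * g ω) μ := by
      have : (fun ω => c n ω * g ω) = fun ω =>
          c n ω * (X n ω * (1 + β n ω)) + c n ω * ξ n ω - c n ω * ζ n ω := by
        funext ω; simp only [hg]; ring
      rw [this]
      exact ((int2 n).add (int3 n)).sub (int4 n)
    have hrw : S (n + 1) = S n + ((fun ω => c n ω * X (n + 1) ω) - fun ω => c n ω * g ω) := by
      funext ω
      simp only [Pi.add_apply, Pi.sub_apply, hS, rsS, Finset.sum_range_succ, hg]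
      ring
    have e1 : μ[S (n + 1)|ℱ n] =ᵐ[μ] μ[S n|ℱ n] +
        μ[(fun ω => c n ω * X (n + 1) ω) - fun ω => c n ω * g ω|ℱ n] := by
      rw [hrw]
      exact condExp_add (hSint n) ((int1 n).sub hcgint) _
    have e2 : μ[(fun ω => c n ω * X (n + 1) ω) - fun ω => c n ω * g ω|ℱ n] =ᵐ[μ]
        μ[fun ω => c n ω * X (n + 1) ω|ℱ n] - μ[fun ω => c n ω * g ω|ℱ n] :=
      condExp_sub (int1 n) hcgint _
    have e3 : μ[S n|ℱ n] = S n :=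
      condExp_of_stronglyMeasurable (ℱ.le n) (hSadp n) (hSint n)
    have e4 : μ[fun ω => c n ω * g ω|ℱ n] = fun ω => c n ω * g ω :=
      condExp_of_stronglyMeasurable (ℱ.le n) ((hcsm n).mul hgsm) hcgint
    have e5 : μ[fun ω => c n ω * X (n + 1) ω|ℱ n] =ᵐ[μ] c n * μ[X (n + 1)|ℱ n] :=
      condExp_mul_of_stronglyMeasurable_left (hcsm n) (int1 n) (hXint (n + 1))
    have key : μ[S (n + 1)|ℱ n] =ᵐ[μ]
        fun ω => S n ω + (c n ω * (μ[X (n + 1)|ℱ n]) ω - c n ω * g ω) := by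
      filter_upwards [e1, e2, e5] with ω h1 h2 h5
      have h3 := congrFun e3 ω
      have h4 := congrFun e4 ω
      simp only [Pi.add_apply, Pi.sub_apply, Pi.mul_apply] at h1 h2 h5 ⊢
      rw [h1, h2, h3, h4, h5]
    filter_upwards [key, hcond n] with ω h1 h2
    rw [h1]
    have h6 : c n ω * (μ[X (n + 1)|ℱ n]) ω ≤ c n ω * g ω :=
      mul_le_mul_of_nonneg_left h2 (hc0 n ω)
    linarith
  have hsuper : Supermartingale S ℱ μ := supermartingale_nat hSadp hSint hstep
  -- pointwise lower bound
  have hlb : ∀ n ω, -(M : ℝ) ≤ S n ω := by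
    intro n ω
    have := RSaux2.lower (b := fun k => β k ω) (u := fun k => ξ k ω) (z := fun k => ζ k ω)
      (x := fun k => X k ω) (fun k => hβ0 k ω) (fun k => hξ0 k ω) (fun k => hζ0 k ω)
      (fun k => hX0 k ω) (fun k => ω ∈ A k) (fun k => c k ω) hM0
      (fun k hk => Set.indicator_of_mem hk _)
      (fun k hk => Set.indicator_of_notMem hk _)
      (fun k hk => ?_) (fun k hk => hk.2) n
    · exact this
    · constructor
      · refine le_trans ?_ hk.1
        exact Finset.sum_le_sum_of_subset_of_nonneg
          (Finset.range_subset_range.2 (Nat.succ_le_succ (Nat.le_succ k)))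
          (fun i _ _ => hβ0 i ω)
      · refine le_trans ?_ hk.2
        exact Finset.sum_le_sum_of_subset_of_nonneg
          (Finset.range_subset_range.2 (Nat.succ_le_succ (Nat.le_succ k)))
          (fun i _ _ => hξ0 i ω)
  -- L¹ bound
  have hS0 : S 0 = X 0 := by funext ω; simp [hS, rsS]
  have hmean : ∀ n, ∫ ω, S n ω ∂μ ≤ ∫ ω, X 0 ω ∂μ := by
    intro n
    have h1 : μ[S n|ℱ 0] ≤ᵐ[μ] S 0 := hsuper.condExp_ae_le (Nat.zero_le n)
    calc ∫ ω, S n ω ∂μ = ∫ ω, (μ[S n|ℱ 0]) ω ∂μ :=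
          (integral_condExp (ℱ.le 0)).symm
      _ ≤ ∫ ω, S 0 ω ∂μ := integral_mono_ae integrable_condExp (hSint 0) h1
      _ = ∫ ω, X 0 ω ∂μ := by rw [hS0]
  have habs : ∀ n, ∫ ω, |S n ω| ∂μ ≤ ∫ ω, X 0 ω ∂μ + 2 * (M : ℝ) := by
    intro n
    have h1 : ∀ ω, |S n ω| ≤ S n ω + 2 * (M : ℝ) := fun ω =>
      abs_le.2 ⟨by linarith [hlb n ω], by linarith [hlb n ω]⟩
    calc ∫ ω, |S n ω| ∂μ ≤ ∫ ω, (S n ω + 2 * (M : ℝ)) ∂μ :=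
          integral_mono (hSint n).abs ((hSint n).add (integrable_const _)) h1
      _ = ∫ ω, S n ω ∂μ + 2 * (M : ℝ) := by
          rw [integral_add (hSint n) (integrable_const _), integral_const]
          simp
      _ ≤ ∫ ω, X 0 ω ∂μ + 2 * (M : ℝ) := by linarith [hmean n]
  set R : NNReal := (∫ ω, X 0 ω ∂μ + 2 * (M : ℝ)).toNNReal with hR
  have hbdd : ∀ n, eLpNorm (S n) 1 μ ≤ (R : ENNReal) := by
    intro n
    rw [eLpNorm_one_eq_lintegral_enorm, ← ofReal_integral_norm_eq_lintegral_enorm (hSint n)]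
    have h1 : ∫ ω, ‖S n ω‖ ∂μ ≤ ∫ ω, X 0 ω ∂μ + 2 * (M : ℝ) := by
      simpa [Real.norm_eq_abs] using habs n
    calc ENNReal.ofReal (∫ ω, ‖S n ω‖ ∂μ)
        ≤ ENNReal.ofReal (∫ ω, X 0 ω ∂μ + 2 * (M : ℝ)) := ENNReal.ofReal_le_ofReal h1
      _ = (R : ENNReal) := rfl
  have hsub : Submartingale (-S) ℱ μ := hsuper.neg
  have hbdd' : ∀ n, eLpNorm ((-S) n) 1 μ ≤ (R : ENNReal) := by
    intro n
    rw [show (-S) n = -(S n) from rfl, eLpNorm_neg]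
    exact hbdd n
  have hconv := hsub.ae_tendsto_limitProcess hbdd'
  filter_upwards [hconv] with ω hω
  refine ⟨-(ℱ.limitProcess (-S) μ ω), ?_⟩
  have := hω.neg
  simp only [Pi.neg_apply, neg_neg] at this
  exact this

end Core

/-- **Robbins–Siegmund theorem.** If `(X_n)`, `(β_n)`, `(ξ_n)`, `(ζ_n)` are nonnegative adapted
sequences with each `X_n` integrable and
`E[X_{n+1} | F_n] ≤ X_n (1 + β_n) + ξ_n − ζ_n` a.s. for every `n`, then almost surely on
`{Σ β_n < ∞} ∩ {Σ ξ_n < ∞}` the sequence `(X_n)` converges to a finite limit and `Σ ζ_n < ∞`. -/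
theorem robbins_siegmund
    {Ω : Type*} {m : MeasurableSpace Ω} {μ : Measure Ω} [IsProbabilityMeasure μ]
    (ℱ : Filtration ℕ m)
    (X β ξ ζ : ℕ → Ω → ℝ)
    (hXadp : Adapted ℱ X) (hβadp : Adapted ℱ β) (hξadp : Adapted ℱ ξ) (hζadp : Adapted ℱ ζ)
    (hX0 : ∀ n ω, 0 ≤ X n ω) (hβ0 : ∀ n ω, 0 ≤ β n ω)
    (hξ0 : ∀ n ω, 0 ≤ ξ n ω) (hζ0 : ∀ n ω, 0 ≤ ζ n ω)
    (hXint : ∀ n, Integrable (X n) μ)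
    (hcond : ∀ n : ℕ,
      μ[X (n + 1) | ℱ n] ≤ᵐ[μ] fun ω => X n ω * (1 + β n ω) + ξ n ω - ζ n ω) :
    ∀ᵐ ω ∂μ,
      ((Summable fun n => β n ω) ∧ (Summable fun n => ξ n ω)) →
        ((∃ l : ℝ, Tendsto (fun n => X n ω) atTop (𝓝 l)) ∧ Summable fun n => ζ n ω) := by
  have hcore : ∀ M : ℕ, ∀ᵐ ω ∂μ, ∃ s : ℝ,
      Tendsto (fun n => rsS X β ξ ζ (M : ℝ) n ω) atTop (𝓝 s) := fun M =>
    rs_core ℱ X β ξ ζ hXadp hβadp hξadp hζadp hX0 hβ0 hξ0 hζ0 hXint hcond M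
  filter_upwards [ae_all_iff.2 hcore] with ω hω hsum
  obtain ⟨hβs, hξs⟩ := hsum
  set M : ℕ := ⌈(∑' n, β n ω) + (∑' n, ξ n ω)⌉₊ with hM
  have hβM : ∀ n, ∑ k ∈ Finset.range n, β k ω ≤ (M : ℝ) := by
    intro n
    calc ∑ k ∈ Finset.range n, β k ω ≤ ∑' k, β k ω :=
          Summable.sum_le_tsum _ (fun k _ => hβ0 k ω) hβs
      _ ≤ (∑' n, β n ω) + (∑' n, ξ n ω) :=
          le_add_of_nonneg_right (tsum_nonneg fun k => hξ0 k ω)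
      _ ≤ (M : ℝ) := Nat.le_ceil _
  have hξM : ∀ n, ∑ k ∈ Finset.range n, ξ k ω ≤ (M : ℝ) := by
    intro n
    calc ∑ k ∈ Finset.range n, ξ k ω ≤ ∑' k, ξ k ω :=
          Summable.sum_le_tsum _ (fun k _ => hξ0 k ω) hξs
      _ ≤ (∑' n, β n ω) + (∑' n, ξ n ω) :=
          le_add_of_nonneg_left (tsum_nonneg fun k => hβ0 k ω)
      _ ≤ (M : ℝ) := Nat.le_ceil _
  obtain ⟨s, hs⟩ := hω M
  have hall : ∀ n, ω ∈ rsA β ξ (M : ℝ) n := fun n => ⟨hβM (n + 1), hξM (n + 1)⟩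
  have hSeq : ∀ n, rsS X β ξ ζ (M : ℝ) n ω =
      X n ω / RSaux.P (fun k => β k ω) n +
        ∑ k ∈ Finset.range n, (ζ k ω - ξ k ω) / RSaux.P (fun k => β k ω) (k + 1) := by
    intro n
    have h1 : ∀ k, rsC β ξ (M : ℝ) k ω = (RSaux.P (fun j => β j ω) (k + 1))⁻¹ := fun k =>
      Set.indicator_of_mem (hall k) _
    calc rsS X β ξ ζ (M : ℝ) n ω
        = X 0 ω + ∑ k ∈ Finset.range n, (RSaux.P (fun j => β j ω) (k + 1))⁻¹ *
            (X (k + 1) ω - (X k ω * (1 + β k ω) + ξ k ω - ζ k ω)) := by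
          unfold rsS
          exact congrArg _ (Finset.sum_congr rfl fun k _ => by rw [h1 k])
      _ = _ := RSaux.teles (b := fun k => β k ω) (fun k => hβ0 k ω)
            (fun k => ξ k ω) (fun k => ζ k ω) (fun k => X k ω) n
  have hs' := hs.congr hSeq
  exact RSaux2.det_main (fun k => hβ0 k ω) (fun k => hξ0 k ω) (fun k => hζ0 k ω)
    (fun k => hX0 k ω) hβM hξM hs'
end

section
/- Let (Ω, F, (F_n)_{n∈ℕ}, P) be a filtered probability space. Let (X_n) be a nonnegative adapted sequence of integrable random variables, (β_n), (ξ_n), (ζ_n) nonnegative adapted sequences, (M_n) a martingale with M_0 = 0, and (A_n) a sequence of random variables with A_0 = 0 and A_n F_{n−1}-measurable for n ≥ 1, such that for every n ≥ 1: X_n = X_0 + Σ_{i=1}^n X_{i−1} β_{i−1} + A_n + M_n, A_n ≤ Σ_{i=1}^n (ξ_{i−1} − ζ_{i−1}), and A_n − A_{n−1} ≤ ξ_{n−1}. Then almost surely the event {Σ_{i≥0} ξ_i < ∞} ∩ {Σ_{i≥0} β_i < ∞} is contained in the event where (X_n) converges to a finite limit and Σ_{i≥0} ζ_i < ∞. 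-/
open MeasureTheory Filter Topology

lemma aux_transform_tendsto {Ω : Type*} {m : MeasurableSpace Ω} {μ : Measure Ω}
    [IsProbabilityMeasure μ] (ℱ : Filtration ℕ m) (M c : ℕ → Ω → ℝ)
    (hM : Martingale M ℱ μ) (hc : Adapted ℱ c)
    (hc0 : ∀ n ω, 0 ≤ c n ω) (hc1 : ∀ n ω, c n ω ≤ 1)
    {R : ℝ} (hR : 0 ≤ R)
    (hb : ∀ n ω, -R ≤ ∑ k ∈ Finset.range n, c k ω * (M (k + 1) ω - M k ω)) :
    ∀ᵐ ω ∂μ, ∃ l, Tendsto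
      (fun n => ∑ k ∈ Finset.range n, c k ω * (M (k + 1) ω - M k ω)) atTop (𝓝 l) := by
  set f : ℕ → Ω → ℝ := fun n => ∑ k ∈ Finset.range n, c k * (M (k + 1) - M k) with hfdef
  have hfapp : ∀ n ω, f n ω = ∑ k ∈ Finset.range n, c k ω * (M (k + 1) ω - M k ω) := by
    intro n ω
    simp [hfdef, Finset.sum_apply]
  have hfsub : Submartingale f ℱ μ := hM.submartingale.sum_mul_sub (fun n => (hc n).stronglyMeasurable) hc1 hc0
  have hfsub' : Submartingale (fun n => -(f n)) ℱ μ := by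
    have h := hM.neg.submartingale.sum_mul_sub (fun n => (hc n).stronglyMeasurable) hc1 hc0
    have heq : (fun n => ∑ k ∈ Finset.range n, c k * ((-M) (k + 1) - (-M) k))
        = fun n => -(f n) := by
      funext n ω
      simp only [Finset.sum_apply, Pi.mul_apply, Pi.sub_apply, Pi.neg_apply, hfapp,
        ← Finset.sum_neg_distrib]
      exact Finset.sum_congr rfl fun k _ => by ring
    rwa [heq] at h
  have hfsuper : Supermartingale f ℱ μ := by
    have h := hfsub'.neg
    have heq : (-fun n => -(f n)) = f := by funext n ω; simp
    rwa [heq] at h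
  have hEf : ∀ n, ∫ ω, f n ω ∂μ ≤ 0 := by
    intro n
    have h := hfsuper.setIntegral_le (Nat.zero_le n) (MeasurableSet.univ)
    simp only [Measure.restrict_univ] at h
    have h0 : ∫ ω, f 0 ω ∂μ = 0 := by simp [hfapp]
    linarith
  have hint : ∀ n, Integrable (f n) μ := fun n => hfsub.integrable n
  have hL1 : ∀ n, eLpNorm (f n) 1 μ ≤ (((2 * R).toNNReal : NNReal) : ENNReal) := by
    intro n
    have habs : ∫ ω, |f n ω| ∂μ ≤ 2 * R := by
      have hle : ∀ ω, |f n ω| ≤ f n ω + 2 * R := by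
        intro ω
        have := hb n ω
        rw [← hfapp n ω] at this
        rcases abs_cases (f n ω) with ⟨h1, _⟩ | ⟨h1, _⟩ <;> [linarith; linarith]
      calc ∫ ω, |f n ω| ∂μ ≤ ∫ ω, (f n ω + 2 * R) ∂μ :=
            integral_mono (hint n).abs ((hint n).add (integrable_const _)) hle
        _ = (∫ ω, f n ω ∂μ) + 2 * R := by
            rw [integral_add (hint n) (integrable_const _)]
            simp [measure_univ]
        _ ≤ 2 * R := by linarith [hEf n]
    have heq : eLpNorm (f n) 1 μ = ENNReal.ofReal (∫ ω, |f n ω| ∂μ) := by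
      rw [eLpNorm_one_eq_lintegral_enorm,
        ← ofReal_integral_norm_eq_lintegral_enorm (hint n)]
      simp [Real.norm_eq_abs]
    rw [heq, ENNReal.ofReal]
    exact ENNReal.coe_le_coe.2 (Real.toNNReal_mono habs)
  have h := hfsub.exists_ae_tendsto_of_bdd hL1
  filter_upwards [h] with ω hω
  obtain ⟨l, hl⟩ := hω
  exact ⟨l, by simpa [hfapp] using hl⟩

/-- Discrete-time form of Corollary 1.4 (Remark 1.3): if the nonnegative adapted sequence
`(X_n)` has the decomposition `X_n = X_0 + Σ_{i=1}^n X_{i−1} β_{i−1} + A_n + M_n` with `M` a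
martingale vanishing at `0` and `A` predictable with `A_0 = 0`, and
`A_n ≤ Σ_{i=1}^n (ξ_{i−1} − ζ_{i−1})`, `A_n − A_{n−1} ≤ ξ_{n−1}`, then almost surely the event
`{Σ ξ_i < ∞} ∩ {Σ β_i < ∞}` is contained in the event where `(X_n)` converges to a finite limit
and `Σ ζ_i < ∞`. -/
theorem semimartingale_convergence_discrete
    {Ω : Type*} {m : MeasurableSpace Ω} {μ : Measure Ω} [IsProbabilityMeasure μ]
    (ℱ : Filtration ℕ m)
    (X β ξ ζ M A : ℕ → Ω → ℝ)
    (hXadp : Adapted ℱ X) (hβadp : Adapted ℱ β) (hξadp : Adapted ℱ ξ) (hζadp : Adapted ℱ ζ)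
    (hX0 : ∀ n ω, 0 ≤ X n ω) (hβ0 : ∀ n ω, 0 ≤ β n ω)
    (hξ0 : ∀ n ω, 0 ≤ ξ n ω) (hζ0 : ∀ n ω, 0 ≤ ζ n ω)
    (hXint : ∀ n, Integrable (X n) μ)
    (hM : Martingale M ℱ μ) (hM0 : ∀ ω, M 0 ω = 0)
    (hA0 : ∀ ω, A 0 ω = 0)
    (hApred : ∀ n : ℕ, StronglyMeasurable[ℱ n] (A (n + 1)))
    (hdecomp : ∀ n : ℕ, 1 ≤ n → ∀ ω,
      X n ω = X 0 ω + (∑ i ∈ Finset.range n, X i ω * β i ω) + A n ω + M n ω)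
    (hAle : ∀ n : ℕ, 1 ≤ n → ∀ ω, A n ω ≤ ∑ i ∈ Finset.range n, (ξ i ω - ζ i ω))
    (hAdiff : ∀ n : ℕ, 1 ≤ n → ∀ ω, A n ω - A (n - 1) ω ≤ ξ (n - 1) ω) :
    ∀ᵐ ω ∂μ,
      ((Summable fun i => ξ i ω) ∧ (Summable fun i => β i ω)) →
        ((∃ l : ℝ, Tendsto (fun n => X n ω) atTop (𝓝 l)) ∧ Summable fun i => ζ i ω) := by
  classical
  -- decomposition valid for all n
  have hdec : ∀ n ω,
      X n ω = X 0 ω + (∑ i ∈ Finset.range n, X i ω * β i ω) + A n ω + M n ω := by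
    intro n ω
    rcases Nat.eq_zero_or_pos n with rfl | hn
    · simp [hA0, hM0]
    · exact hdecomp n hn ω
  have hAd : ∀ k : ℕ, ∀ ω, A (k + 1) ω - A k ω ≤ ξ k ω := by
    intro k ω
    have := hAdiff (k + 1) (Nat.le_add_left 1 k) ω
    simpa using this
  -- the product process
  set P : ℕ → Ω → ℝ := fun n ω => ∏ i ∈ Finset.range n, (1 + β i ω) with hPdef
  have hP1 : ∀ n ω, 1 ≤ P n ω := by
    intro n ω
    simp only [hPdef]
    have h := Finset.prod_le_prod (f := fun _ => (1 : ℝ)) (g := fun i => 1 + β i ω)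
      (s := Finset.range n) (fun i _ => by norm_num) (fun i _ => by show (1:ℝ) ≤ 1 + β i ω; linarith [hβ0 i ω])
    simpa using h
  have hPpos : ∀ n ω, 0 < P n ω := fun n ω => lt_of_lt_of_le one_pos (hP1 n ω)
  have hPsucc : ∀ n ω, P (n + 1) ω = P n ω * (1 + β n ω) := by
    intro n ω; exact Finset.prod_range_succ _ _
  have hPexp : ∀ n ω, P n ω ≤ Real.exp (∑ i ∈ Finset.range n, β i ω) := by
    intro n ω
    rw [Real.exp_sum]
    exact Finset.prod_le_prod (fun i _ => by linarith [hβ0 i ω])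
      (fun i _ => by simpa [add_comm] using Real.add_one_le_exp (β i ω))
  have hPmeas : ∀ i : ℕ, Measurable[ℱ i] (P (i + 1)) := by
    intro i
    apply Finset.measurable_prod
    intro t ht
    have ht' : t ≤ i := Nat.lt_succ_iff.mp (Finset.mem_range.mp ht)
    exact (measurable_const.add ((hβadp t).mono (ℱ.mono ht') le_rfl))
  -- measurability of partial sums
  have hsummeas : ∀ (f : ℕ → Ω → ℝ), Adapted ℱ f → ∀ i : ℕ,
      Measurable[ℱ i] (fun ω => ∑ t ∈ Finset.range (i + 1), f t ω) := by
    intro f hf i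
    apply Finset.measurable_sum
    intro t ht
    have ht' : t ≤ i := Nat.lt_succ_iff.mp (Finset.mem_range.mp ht)
    exact ((hf t).mono (ℱ.mono ht') le_rfl)
  have hX0meas : ∀ i : ℕ, Measurable[ℱ i] (X 0) :=
    fun i => ((hXadp 0).mono (ℱ.mono (Nat.zero_le i)) le_rfl)
  -- stage 1 data
  set G : ℕ → ℕ → Set Ω := fun K k => {ω | X 0 ω ≤ (K : ℝ) ∧
      (∑ t ∈ Finset.range (k + 1), ξ t ω) ≤ (K : ℝ) ∧
      (∑ t ∈ Finset.range (k + 1), β t ω) ≤ (K : ℝ)} with hGdef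
  set c : ℕ → ℕ → Ω → ℝ := fun K k ω => if ω ∈ G K k then (P (k + 1) ω)⁻¹ else 0 with hcdef
  have hGmeas : ∀ K k, MeasurableSet[ℱ k] (G K k) := by
    intro K k
    have : G K k = {ω | X 0 ω ≤ (K : ℝ)} ∩
        ({ω | (∑ t ∈ Finset.range (k + 1), ξ t ω) ≤ (K : ℝ)} ∩
         {ω | (∑ t ∈ Finset.range (k + 1), β t ω) ≤ (K : ℝ)}) := rfl
    rw [this]
    exact (measurableSet_le (hX0meas k) measurable_const).inter
      ((measurableSet_le (hsummeas ξ hξadp k) measurable_const).inter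
       (measurableSet_le (hsummeas β hβadp k) measurable_const))
  have hGanti : ∀ K j k, j ≤ k → G K k ⊆ G K j := by
    intro K j k hjk ω hω
    obtain ⟨h1, h2, h3⟩ := hω
    refine ⟨h1, le_trans ?_ h2, le_trans ?_ h3⟩ <;>
      exact Finset.sum_le_sum_of_subset_of_nonneg
        (Finset.range_subset_range.2 (by omega)) (fun t _ _ => by first | exact hξ0 t ω | exact hβ0 t ω)
  have hcadp : ∀ K, Adapted ℱ (c K) := by
    intro K k
    exact (Measurable.ite (hGmeas K k) (hPmeas k).inv measurable_const)
  have hc0 : ∀ K k ω, 0 ≤ c K k ω := by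
    intro K k ω
    simp only [hcdef]
    split
    · exact inv_nonneg.2 (le_of_lt (hPpos _ ω))
    · exact le_refl 0
  have hc1 : ∀ K k ω, c K k ω ≤ 1 := by
    intro K k ω
    simp only [hcdef]
    split
    · exact inv_le_one_of_one_le₀ (hP1 _ ω)
    · exact zero_le_one
  have hdM : ∀ k ω, M (k + 1) ω - M k ω
      = (X (k + 1) ω - X k ω) - X k ω * β k ω - (A (k + 1) ω - A k ω) := by
    intro k ω
    have e1 := hdec (k + 1) ω
    have e2 := hdec k ω
    rw [Finset.sum_range_succ] at e1
    linarith
  have htel : ∀ K (ω : Ω) (n : ℕ), (∀ k < n, ω ∈ G K k) →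
      (∑ k ∈ Finset.range n, c K k ω * (M (k + 1) ω - M k ω))
        = X n ω / P n ω - X 0 ω
          - ∑ k ∈ Finset.range n, (A (k + 1) ω - A k ω) / P (k + 1) ω := by
    intro K ω n
    induction n with
    | zero => intro _; simp [hPdef]
    | succ n ih =>
      intro hall
      have ihh := ih (fun k hk => hall k (hk.trans (lt_add_one n)))
      rw [Finset.sum_range_succ, Finset.sum_range_succ, ihh]
      have hcn : c K n ω = (P (n + 1) ω)⁻¹ := if_pos (hall n (lt_add_one n))
      rw [hcn, hdM n ω]
      have hPn : P (n + 1) ω = P n ω * (1 + β n ω) := hPsucc n ω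
      have h1 : P n ω ≠ 0 := ne_of_gt (hPpos n ω)
      have h2 : (1 + β n ω) ≠ 0 := by linarith [hβ0 n ω]
      rw [hPn]
      field_simp
      ring
  have hAd' : ∀ k (ω : Ω), (A (k + 1) ω - A k ω) / P (k + 1) ω ≤ ξ k ω := by
    intro k ω
    rcases le_or_gt 0 (A (k + 1) ω - A k ω) with h | h
    · exact le_trans (div_le_self h (hP1 (k + 1) ω)) (hAd k ω)
    · exact le_trans (le_of_lt (div_neg_of_neg_of_pos h (hPpos (k + 1) ω))) (hξ0 k ω)
  have hb1 : ∀ (K : ℕ) (n : ℕ) (ω : Ω),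
      -((K : ℝ) + K) ≤ ∑ k ∈ Finset.range n, c K k ω * (M (k + 1) ω - M k ω) := by
    intro K n ω
    induction n with
    | zero => simp
    | succ n ih =>
      by_cases hall : ∀ k < n + 1, ω ∈ G K k
      · rw [htel K ω (n + 1) hall]
        have t1 : 0 ≤ X (n + 1) ω / P (n + 1) ω :=
          div_nonneg (hX0 _ ω) (le_of_lt (hPpos _ ω))
        have t2 : X 0 ω ≤ (K : ℝ) := (hall 0 (Nat.succ_pos n)).1
        have t3 : (∑ k ∈ Finset.range (n + 1), (A (k + 1) ω - A k ω) / P (k + 1) ω)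
            ≤ (K : ℝ) := by
          refine le_trans (Finset.sum_le_sum fun k _ => hAd' k ω) ?_
          exact (hall n (lt_add_one n)).2.1
        linarith
      · push_neg at hall
        obtain ⟨k, hk, hkG⟩ := hall
        have hnG : ω ∉ G K n := fun h => hkG (hGanti K k n (Nat.lt_succ_iff.mp hk) h)
        have : c K n ω = 0 := if_neg hnG
        rw [Finset.sum_range_succ, this, zero_mul, add_zero]
        exact ih
  have stage1 : ∀ K : ℕ, ∀ᵐ ω ∂μ, ∃ l, Tendsto
      (fun n => ∑ k ∈ Finset.range n, c K k ω * (M (k + 1) ω - M k ω)) atTop (𝓝 l) := by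
    intro K
    exact aux_transform_tendsto ℱ M (c K) hM (hcadp K) (fun k ω => hc0 K k ω)
      (fun k ω => hc1 K k ω) (by positivity) (hb1 K)
  -- stage 2 data
  set H : ℕ → ℕ → Set Ω := fun K k => G K k ∩ {ω | ∀ j ≤ k, X j ω ≤ (K : ℝ)} with hHdef
  set d : ℕ → ℕ → Ω → ℝ := fun K k ω => if ω ∈ H K k then (1 : ℝ) else 0 with hddef
  have hHmeas : ∀ K k, MeasurableSet[ℱ k] (H K k) := by
    intro K k
    refine (hGmeas K k).inter ?_
    have : {ω | ∀ j ≤ k, X j ω ≤ (K : ℝ)} = ⋂ j ∈ Set.Iic k, {ω | X j ω ≤ (K : ℝ)} := by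
      ext ω; simp [Set.mem_iInter]
    rw [this]
    exact MeasurableSet.biInter (Set.to_countable _) fun j hj =>
      measurableSet_le ((hXadp j).mono (ℱ.mono hj) le_rfl) measurable_const
  have hHanti : ∀ K j k, j ≤ k → H K k ⊆ H K j := by
    intro K j k hjk ω hω
    exact ⟨hGanti K j k hjk hω.1, fun t ht => hω.2 t (ht.trans hjk)⟩
  have hdadp : ∀ K, Adapted ℱ (d K) := by
    intro K k
    exact (Measurable.ite (hHmeas K k) measurable_const measurable_const)
  have hd0 : ∀ K k ω, 0 ≤ d K k ω := by
    intro K k ω; simp only [hddef]; split <;> norm_num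
  have hd1 : ∀ K k ω, d K k ω ≤ 1 := by
    intro K k ω; simp only [hddef]; split <;> norm_num
  have htel2 : ∀ K (ω : Ω) (n : ℕ), (∀ k < n, ω ∈ H K k) →
      (∑ k ∈ Finset.range n, d K k ω * (M (k + 1) ω - M k ω)) = M n ω := by
    intro K ω n
    induction n with
    | zero => intro _; simp [hM0]
    | succ n ih =>
      intro hall
      have ihh := ih (fun k hk => hall k (hk.trans (lt_add_one n)))
      rw [Finset.sum_range_succ, ihh]
      have hdn : d K n ω = 1 := if_pos (hall n (lt_add_one n))
      rw [hdn]
      ring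
  have hb2 : ∀ (K : ℕ) (n : ℕ) (ω : Ω),
      -((K : ℝ) + K * K + K) ≤ ∑ k ∈ Finset.range n, d K k ω * (M (k + 1) ω - M k ω) := by
    intro K n ω
    induction n with
    | zero =>
      simp only [Finset.range_zero, Finset.sum_empty]
      have hK : (0 : ℝ) ≤ (K : ℝ) := Nat.cast_nonneg K
      nlinarith
    | succ n ih =>
      by_cases hall : ∀ k < n + 1, ω ∈ H K k
      · rw [htel2 K ω (n + 1) hall]
        have hlast := hall n (lt_add_one n)
        have e := hdec (n + 1) ω
        have t1 : 0 ≤ X (n + 1) ω := hX0 _ ω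
        have t2 : X 0 ω ≤ (K : ℝ) := hlast.1.1
        have t3 : (∑ i ∈ Finset.range (n + 1), X i ω * β i ω) ≤ (K : ℝ) * K := by
          have h1 : (∑ i ∈ Finset.range (n + 1), X i ω * β i ω)
              ≤ ∑ i ∈ Finset.range (n + 1), (K : ℝ) * β i ω := by
            refine Finset.sum_le_sum fun i hi => ?_
            have hXi : X i ω ≤ (K : ℝ) :=
              hlast.2 i (Nat.lt_succ_iff.mp (Finset.mem_range.mp hi))
            exact mul_le_mul_of_nonneg_right hXi (hβ0 i ω)
          rw [← Finset.mul_sum] at h1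
          exact h1.trans (mul_le_mul_of_nonneg_left hlast.1.2.2 (Nat.cast_nonneg K))
        have t4 : A (n + 1) ω ≤ (K : ℝ) := by
          refine le_trans (hAle (n + 1) (Nat.succ_le_succ (Nat.zero_le n)) ω) ?_
          refine le_trans (Finset.sum_le_sum fun i _ => ?_) hlast.1.2.1
          linarith [hζ0 i ω]
        linarith
      · push_neg at hall
        obtain ⟨k, hk, hkH⟩ := hall
        have hnH : ω ∉ H K n := fun h => hkH (hHanti K k n (Nat.lt_succ_iff.mp hk) h)
        have : d K n ω = 0 := if_neg hnH
        rw [Finset.sum_range_succ, this, zero_mul, add_zero]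
        exact ih
  have stage2 : ∀ K : ℕ, ∀ᵐ ω ∂μ, ∃ l, Tendsto
      (fun n => ∑ k ∈ Finset.range n, d K k ω * (M (k + 1) ω - M k ω)) atTop (𝓝 l) := by
    intro K
    exact aux_transform_tendsto ℱ M (d K) hM (hdadp K) (fun k ω => hd0 K k ω)
      (fun k ω => hd1 K k ω) (by positivity) (hb2 K)
  -- assembly
  filter_upwards [ae_all_iff.2 stage1, ae_all_iff.2 stage2] with ω h1 h2
  rintro ⟨hξs, hβs⟩
  obtain ⟨K₁, hK₁⟩ := exists_nat_ge (max (X 0 ω) (max (∑' i, ξ i ω) (∑' i, β i ω)))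
  have hX0K : X 0 ω ≤ (K₁ : ℝ) := le_trans (le_max_left _ _) hK₁
  have htξ : (∑' i, ξ i ω) ≤ (K₁ : ℝ) :=
    le_trans (le_trans (le_max_left _ _) (le_max_right _ _)) hK₁
  have htβ : (∑' i, β i ω) ≤ (K₁ : ℝ) :=
    le_trans (le_trans (le_max_right _ _) (le_max_right _ _)) hK₁
  have hpsξ : ∀ n, (∑ t ∈ Finset.range n, ξ t ω) ≤ (K₁ : ℝ) := fun n =>
    le_trans (Summable.sum_le_tsum _ (fun t _ => hξ0 t ω) hξs) htξ
  have hpsβ : ∀ n, (∑ t ∈ Finset.range n, β t ω) ≤ (K₁ : ℝ) := fun n =>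
    le_trans (Summable.sum_le_tsum _ (fun t _ => hβ0 t ω) hβs) htβ
  have hGall : ∀ k, ω ∈ G K₁ k := fun k => ⟨hX0K, hpsξ _, hpsβ _⟩
  obtain ⟨l₁, hl₁⟩ := h1 K₁
  have hNform : ∀ n, (∑ k ∈ Finset.range n, c K₁ k ω * (M (k + 1) ω - M k ω))
      = X n ω / P n ω - X 0 ω
        - ∑ k ∈ Finset.range n, (A (k + 1) ω - A k ω) / P (k + 1) ω :=
    fun n => htel K₁ ω n fun k _ => hGall k
  obtain ⟨C, hC⟩ := hl₁.bddAbove_range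
  have hXdiv : ∀ n, X n ω / P n ω ≤ C + X 0 ω + K₁ := by
    intro n
    have h := hC (Set.mem_range_self n)
    rw [hNform n] at h
    have hA' : (∑ k ∈ Finset.range n, (A (k + 1) ω - A k ω) / P (k + 1) ω) ≤ (K₁ : ℝ) :=
      le_trans (Finset.sum_le_sum fun k _ => hAd' k ω) (hpsξ n)
    linarith
  set CX : ℝ := (C + X 0 ω + K₁) * Real.exp (∑' i, β i ω) with hCXdef
  have hXbd : ∀ n, X n ω ≤ CX := by
    intro n
    have h0 : 0 ≤ C + X 0 ω + (K₁ : ℝ) :=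
      le_trans (div_nonneg (hX0 n ω) (hPpos n ω).le) (hXdiv n)
    have hPn : P n ω ≤ Real.exp (∑' i, β i ω) :=
      le_trans (hPexp n ω) (Real.exp_le_exp.2 (Summable.sum_le_tsum _ (fun t _ => hβ0 t ω) hβs))
    calc X n ω = (X n ω / P n ω) * P n ω := by
          rw [div_mul_cancel₀ _ (ne_of_gt (hPpos n ω))]
      _ ≤ (C + X 0 ω + (K₁ : ℝ)) * Real.exp (∑' i, β i ω) :=
          mul_le_mul (hXdiv n) hPn (hPpos n ω).le h0
  obtain ⟨K₂, hK₂⟩ := exists_nat_ge (max (K₁ : ℝ) CX)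
  have hK₁₂ : (K₁ : ℝ) ≤ (K₂ : ℝ) := le_trans (le_max_left _ _) hK₂
  have hHall : ∀ k, ω ∈ H K₂ k := fun k =>
    ⟨⟨le_trans hX0K hK₁₂, le_trans (hpsξ _) hK₁₂, le_trans (hpsβ _) hK₁₂⟩,
     fun j _ => le_trans (hXbd j) (le_trans (le_max_right _ _) hK₂)⟩
  obtain ⟨l₂, hl₂⟩ := h2 K₂
  have hMform : ∀ n, (∑ k ∈ Finset.range n, d K₂ k ω * (M (k + 1) ω - M k ω)) = M n ω :=
    fun n => htel2 K₂ ω n fun k _ => hHall k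
  have hMconv : Tendsto (fun n => M n ω) atTop (𝓝 l₂) := Tendsto.congr hMform hl₂
  have hXβs : Summable fun i => X i ω * β i ω := by
    refine Summable.of_nonneg_of_le (fun i => mul_nonneg (hX0 i ω) (hβ0 i ω))
      (fun i => ?_) (hβs.mul_left (K₂ : ℝ))
    exact mul_le_mul_of_nonneg_right ((hHall i).2 i le_rfl) (hβ0 i ω)
  have hSconv := hXβs.hasSum.tendsto_sum_nat
  have hξconv := hξs.hasSum.tendsto_sum_nat
  set B : ℕ → ℝ := fun n => A n ω - ∑ t ∈ Finset.range n, ξ t ω with hBdef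
  have hBanti : Antitone B := by
    refine antitone_nat_of_succ_le fun n => ?_
    have h := hAd n ω
    simp only [hBdef, Finset.sum_range_succ]
    linarith
  obtain ⟨CM, hCM⟩ := hMconv.bddAbove_range
  have hSbd : ∀ n, (∑ i ∈ Finset.range n, X i ω * β i ω) ≤ ∑' i, X i ω * β i ω :=
    fun n => Summable.sum_le_tsum _ (fun i _ => mul_nonneg (hX0 i ω) (hβ0 i ω)) hXβs
  have hBlow : ∀ n,
      -((K₂ : ℝ) + (∑' i, X i ω * β i ω) + CM + (∑' i, ξ i ω)) ≤ B n := by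
    intro n
    have e := hdec n ω
    have hMn : M n ω ≤ CM := hCM (Set.mem_range_self n)
    have hXn : 0 ≤ X n ω := hX0 n ω
    have hX0n : X 0 ω ≤ (K₂ : ℝ) := le_trans hX0K hK₁₂
    have hSn := hSbd n
    have hξn : (∑ t ∈ Finset.range n, ξ t ω) ≤ ∑' i, ξ i ω :=
      Summable.sum_le_tsum _ (fun t _ => hξ0 t ω) hξs
    simp only [hBdef]
    linarith
  have hBbdd : BddBelow (Set.range B) := by
    refine ⟨-((K₂ : ℝ) + (∑' i, X i ω * β i ω) + CM + (∑' i, ξ i ω)), ?_⟩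
    rintro x ⟨n, rfl⟩
    exact hBlow n
  have hBconv : Tendsto B atTop (𝓝 (⨅ n, B n)) := tendsto_atTop_ciInf hBanti hBbdd
  have hAconv : Tendsto (fun n => A n ω) atTop (𝓝 ((⨅ n, B n) + ∑' i, ξ i ω)) := by
    refine Tendsto.congr (fun n => ?_) (hBconv.add hξconv)
    simp only [hBdef]
    ring
  have hXconv : Tendsto (fun n => X n ω) atTop
      (𝓝 (((X 0 ω + ∑' i, X i ω * β i ω) + ((⨅ n, B n) + ∑' i, ξ i ω)) + l₂)) := by
    refine Tendsto.congr (fun n => (hdec n ω).symm)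
      (((tendsto_const_nhds.add hSconv).add hAconv).add hMconv)
  refine ⟨⟨_, hXconv⟩, ?_⟩
  have hbinf : ∀ n, (⨅ n, B n) ≤ B n := fun n => ciInf_le hBbdd n
  refine summable_of_sum_range_le (fun n => hζ0 n ω) (fun n => ?_) (c := -(⨅ n, B n))
  rcases Nat.eq_zero_or_pos n with rfl | hn
  · simp only [Finset.range_zero, Finset.sum_empty]
    have h0 := hbinf 0
    simp only [hBdef, Finset.range_zero, Finset.sum_empty, hA0 ω, sub_zero] at h0
    linarith
  · have hle := hAle n hn ω
    rw [Finset.sum_sub_distrib] at hle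
    have h := hbinf n
    simp only [hBdef] at h
    linarith
end

section
/- Let (Ω, F, (F_n)_{n∈ℕ}, P) be a filtered probability space. Let (X_n) be a nonnegative adapted sequence of integrable random variables admitting a decomposition X_n = X_0 + A¹_n − A²_n + M_n, where (A¹_n) and (A²_n) are nondecreasing sequences with A¹_0 = A²_0 = 0 such that A¹_n and A²_n are F_{n−1}-measurable for n ≥ 1 (predictable increasing processes), and (M_n) is a martingale with M_0 = 0. Define Â_n = Σ_{i=1}^n (1 + X_{i−1} + A²_{i−1})^{−1}(A¹_i − A¹_{i−1}). Then almost surely the event {Â_∞ < ∞} is contained in the event where (X_n) converges to a finite limit and A²_∞ < ∞. -/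
open MeasureTheory Filter Topology

section StoppedAux

variable {Ω : Type*} (W : ℕ → Ω → ℝ) (c : ℝ)

open Classical in
/-- The process `W` stopped at the first time it exceeds `c`. -/
noncomputable def scdStop (n : ℕ) (ω : Ω) : ℝ :=
  if h : ∃ k, k < n ∧ c < W k ω then W (Nat.find h) ω else W n ω

theorem scdStop_of_le {n : ℕ} {ω : Ω} (h : ∀ k, k < n → W k ω ≤ c) :
    scdStop W c n ω = W n ω := by
  rw [scdStop, dif_neg]
  rintro ⟨k, hk, hck⟩
  exact absurd (h k hk) (not_le.2 hck)

theorem scdStop_zero (ω : Ω) : scdStop W c 0 ω = W 0 ω :=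
  scdStop_of_le W c fun k hk => absurd hk (Nat.not_lt_zero k)

theorem scdStop_exists {n : ℕ} {ω : Ω} : ∃ k, k ≤ n ∧ scdStop W c n ω = W k ω := by
  rw [scdStop]
  split_ifs with h
  · exact ⟨Nat.find h, (Nat.find_spec h).1.le, rfl⟩
  · exact ⟨n, le_rfl, rfl⟩

theorem scdStop_succ_of_le {n : ℕ} {ω : Ω} (h : ∀ k, k ≤ n → W k ω ≤ c) :
    scdStop W c (n + 1) ω = W (n + 1) ω :=
  scdStop_of_le W c fun k hk => h k (Nat.lt_succ_iff.1 hk)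

theorem scdStop_succ_of_exceed {n : ℕ} {ω : Ω} (h : ∃ k, k ≤ n ∧ c < W k ω) :
    scdStop W c (n + 1) ω = scdStop W c n ω := by
  classical
  obtain ⟨k0, hk0n, hck0⟩ := h
  have h1 : ∃ k, k < n + 1 ∧ c < W k ω := ⟨k0, Nat.lt_succ_of_le hk0n, hck0⟩
  rw [scdStop, dif_pos h1, scdStop]
  split_ifs with h0
  · have hs0 := Nat.find_spec h0
    have hle : Nat.find h1 ≤ Nat.find h0 :=
      Nat.find_min' h1 ⟨Nat.lt_succ_of_lt hs0.1, hs0.2⟩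
    have hs1 := Nat.find_spec h1
    have hge : Nat.find h0 ≤ Nat.find h1 :=
      Nat.find_min' h0 ⟨lt_of_le_of_lt hle hs0.1, hs1.2⟩
    rw [le_antisymm hle hge]
  · have hk0 : k0 = n := by
      by_contra hne
      exact h0 ⟨k0, lt_of_le_of_ne hk0n hne, hck0⟩
    have hfind : Nat.find h1 = n := by
      rw [Nat.find_eq_iff]
      exact ⟨⟨n.lt_succ_self, hk0 ▸ hck0⟩, fun m hm hp => h0 ⟨m, hm, hp.2⟩⟩
    rw [hfind]

theorem lt_scdStop_of_exceed {n : ℕ} {ω : Ω} (h : ∃ k, k ≤ n ∧ c < W k ω) :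
    c < scdStop W c n ω := by
  classical
  obtain ⟨k0, hk0n, hck0⟩ := h
  rw [scdStop]
  split_ifs with h0
  · exact (Nat.find_spec h0).2
  · rcases eq_or_lt_of_le hk0n with rfl | hlt
    · exact hck0
    · exact absurd ⟨k0, hlt, hck0⟩ h0

theorem scdStop_succ_sub (n : ℕ) (ω : Ω) :
    scdStop W c (n + 1) ω = scdStop W c n ω +
      Set.indicator {ω | ∀ k, k ≤ n → W k ω ≤ c} (fun ω => W (n + 1) ω - W n ω) ω := by
  by_cases hS : ∀ k, k ≤ n → W k ω ≤ c
  · have hmem : ω ∈ {ω : Ω | ∀ k, k ≤ n → W k ω ≤ c} := hS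
    rw [scdStop_succ_of_le W c hS, scdStop_of_le W c fun k hk => hS k hk.le,
      Set.indicator_of_mem hmem]
    ring
  · push_neg at hS
    obtain ⟨k, hk, hck⟩ := hS
    rw [scdStop_succ_of_exceed W c ⟨k, hk, hck⟩, Set.indicator_of_notMem, add_zero]
    intro hmem
    exact absurd (hmem k hk) (not_le.2 hck)

end StoppedAux

/-- Discrete-time form of Theorem 1.1: for a nonnegative adapted integrable sequence
`X_n = X_0 + A¹_n − A²_n + M_n` with `A¹, A²` predictable nondecreasing starting at `0` and `M`
a martingale with `M_0 = 0`, setting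
`Â_n = Σ_{i=1}^n (1 + X_{i−1} + A²_{i−1})⁻¹ (A¹_i − A¹_{i−1})`, almost surely the event
`{Â_∞ < ∞}` is contained in the event where `(X_n)` converges to a finite limit and
`A²_∞ < ∞`. -/
theorem semimartingale_convergence_sets_discrete
    {Ω : Type*} {m : MeasurableSpace Ω} {μ : Measure Ω} [IsProbabilityMeasure μ]
    (ℱ : Filtration ℕ m)
    (X M A1 A2 : ℕ → Ω → ℝ)
    (hXadp : Adapted ℱ X) (hX0 : ∀ n ω, 0 ≤ X n ω) (hXint : ∀ n, Integrable (X n) μ)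
    (hA1mono : ∀ ω, Monotone fun n => A1 n ω) (hA2mono : ∀ ω, Monotone fun n => A2 n ω)
    (hA10 : ∀ ω, A1 0 ω = 0) (hA20 : ∀ ω, A2 0 ω = 0)
    (hA1pred : ∀ n : ℕ, StronglyMeasurable[ℱ n] (A1 (n + 1)))
    (hA2pred : ∀ n : ℕ, StronglyMeasurable[ℱ n] (A2 (n + 1)))
    (hM : Martingale M ℱ μ) (hM0 : ∀ ω, M 0 ω = 0)
    (hdecomp : ∀ n ω, X n ω = X 0 ω + A1 n ω - A2 n ω + M n ω) :
    ∀ᵐ ω ∂μ,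
      (Summable fun i => (1 + X i ω + A2 i ω)⁻¹ * (A1 (i + 1) ω - A1 i ω)) →
        ((∃ l : ℝ, Tendsto (fun n => X n ω) atTop (𝓝 l)) ∧
          ∃ l : ℝ, Tendsto (fun n => A2 n ω) atTop (𝓝 l)) := by
  classical
  obtain ⟨P, hPdef⟩ : ∃ P : ℕ → Ω → ℝ, P = fun n ω =>
      ∏ i ∈ Finset.range n, (1 + (1 + X i ω + A2 i ω)⁻¹ * (A1 (i + 1) ω - A1 i ω)) := ⟨_, rfl⟩
  have hPdef' : ∀ n ω, P n ω =
      ∏ i ∈ Finset.range n, (1 + (1 + X i ω + A2 i ω)⁻¹ * (A1 (i + 1) ω - A1 i ω)) := by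
    rw [hPdef]; intro n ω; rfl
  obtain ⟨W, hWdef⟩ : ∃ W' : ℕ → Ω → ℝ,
      W' = fun n ω => (1 + X n ω + A2 n ω) / P n ω := ⟨_, rfl⟩
  have hWdef' : ∀ n ω, W n ω = (1 + X n ω + A2 n ω) / P n ω := by
    rw [hWdef]; intro n ω; rfl
  -- basic positivity facts
  have hA2nn : ∀ n ω, 0 ≤ A2 n ω := fun n ω => (hA20 ω) ▸ hA2mono ω (Nat.zero_le n)
  have hA1inc : ∀ n ω, 0 ≤ A1 (n + 1) ω - A1 n ω :=
    fun n ω => sub_nonneg.2 (hA1mono ω (Nat.le_succ n))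
  have hD1 : ∀ n ω, (1 : ℝ) ≤ 1 + X n ω + A2 n ω := fun n ω => by
    linarith [hX0 n ω, hA2nn n ω]
  have hDpos : ∀ n ω, (0 : ℝ) < 1 + X n ω + A2 n ω := fun n ω =>
    lt_of_lt_of_le one_pos (hD1 n ω)
  have hδnn : ∀ n ω, 0 ≤ (1 + X n ω + A2 n ω)⁻¹ * (A1 (n + 1) ω - A1 n ω) := fun n ω =>
    mul_nonneg (inv_nonneg.2 (hDpos n ω).le) (hA1inc n ω)
  have hP1 : ∀ n ω, (1 : ℝ) ≤ P n ω := by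
    intro n ω
    rw [hPdef' n ω]
    have h := Finset.prod_le_prod (s := Finset.range n) (f := fun _ => (1 : ℝ))
      (g := fun i => 1 + (1 + X i ω + A2 i ω)⁻¹ * (A1 (i + 1) ω - A1 i ω))
      (fun i _ => zero_le_one) (fun i _ => by linarith [hδnn i ω])
    simpa using h
  have hPpos : ∀ n ω, 0 < P n ω := fun n ω => lt_of_lt_of_le one_pos (hP1 n ω)
  have hWnn : ∀ n ω, 0 ≤ W n ω := fun n ω => by
    rw [hWdef' n ω]; exact div_nonneg (hDpos n ω).le (hPpos n ω).le
  have hPsucc : ∀ n ω, P (n + 1) ω =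
      P n ω * (1 + (1 + X n ω + A2 n ω)⁻¹ * (A1 (n + 1) ω - A1 n ω)) := by
    intro n ω; rw [hPdef' (n + 1) ω, hPdef' n ω]; exact Finset.prod_range_succ _ _
  -- key algebraic identity
  have hkey : ∀ n ω, W (n + 1) ω = W n ω +
      W n ω / ((1 + X n ω + A2 n ω) + (A1 (n + 1) ω - A1 n ω)) * (M (n + 1) ω - M n ω) := by
    intro n ω
    have hd := hDpos n ω
    have ha := hA1inc n ω
    have hda : (0 : ℝ) < (1 + X n ω + A2 n ω) + (A1 (n + 1) ω - A1 n ω) := by linarith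
    have hp := hPpos n ω
    have hone : (0 : ℝ) < 1 + (1 + X n ω + A2 n ω)⁻¹ * (A1 (n + 1) ω - A1 n ω) := by
      linarith [hδnn n ω]
    have hDsucc : 1 + X (n + 1) ω + A2 (n + 1) ω =
        (1 + X n ω + A2 n ω) + (A1 (n + 1) ω - A1 n ω) + (M (n + 1) ω - M n ω) := by
      have h1 := hdecomp (n + 1) ω; have h2 := hdecomp n ω; linarith
    rw [hWdef' (n + 1) ω, hWdef' n ω, hDsucc, hPsucc n ω]
    field_simp
  -- measurability facts
  have hXm : ∀ n, Measurable[ℱ n] (X n) := fun n => hXadp n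
  have hA1m : ∀ n, Measurable[ℱ n] (A1 n) := by
    rintro (_ | k)
    · have h0 : A1 0 = fun _ => (0 : ℝ) := funext hA10
      rw [h0]; exact measurable_const
    · exact (hA1pred k).measurable.mono (ℱ.mono k.le_succ) le_rfl
  have hA2m : ∀ n, Measurable[ℱ n] (A2 n) := by
    rintro (_ | k)
    · have h0 : A2 0 = fun _ => (0 : ℝ) := funext hA20
      rw [h0]; exact measurable_const
    · exact (hA2pred k).measurable.mono (ℱ.mono k.le_succ) le_rfl
  have hMm : ∀ n, Measurable[ℱ n] (M n) := fun n => (hM.stronglyAdapted n).measurable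
  have hPm : ∀ n k, n ≤ k → Measurable[ℱ k] (P n) := by
    intro n k hnk
    have h0 : P n = fun ω =>
        ∏ i ∈ Finset.range n, (1 + (1 + X i ω + A2 i ω)⁻¹ * (A1 (i + 1) ω - A1 i ω)) :=
      funext (hPdef' n)
    rw [h0]
    refine Finset.measurable_prod _ fun i hi => ?_
    have hik : i ≤ k := le_trans (Finset.mem_range.1 hi).le hnk
    have hXi : Measurable[ℱ k] (X i) := (hXm i).mono (ℱ.mono hik) le_rfl
    have hA2i : Measurable[ℱ k] (A2 i) := (hA2m i).mono (ℱ.mono hik) le_rfl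
    have hA1i : Measurable[ℱ k] (A1 i) := (hA1m i).mono (ℱ.mono hik) le_rfl
    have hA1si : Measurable[ℱ k] (A1 (i + 1)) :=
      (hA1pred i).measurable.mono (ℱ.mono hik) le_rfl
    exact measurable_const.add
      ((((measurable_const.add hXi).add hA2i).inv).mul (hA1si.sub hA1i))
  have hWm : ∀ n, Measurable[ℱ n] (W n) := by
    intro n
    have h0 : W n = fun ω => (1 + X n ω + A2 n ω) / P n ω := funext (hWdef' n)
    rw [h0]
    exact ((measurable_const.add (hXm n)).add (hA2m n)).div (hPm n n le_rfl)
  -- the function appearing in increments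
  obtain ⟨g, hgdef⟩ : ∃ g' : ℕ → Ω → ℝ, g' = fun n ω =>
      W n ω / ((1 + X n ω + A2 n ω) + (A1 (n + 1) ω - A1 n ω)) := ⟨_, rfl⟩
  have hgdef' : ∀ n ω, g n ω =
      W n ω / ((1 + X n ω + A2 n ω) + (A1 (n + 1) ω - A1 n ω)) := by
    rw [hgdef]; intro n ω; rfl
  have hgm : ∀ n, Measurable[ℱ n] (g n) := by
    intro n
    have h0 : g n = fun ω =>
        W n ω / ((1 + X n ω + A2 n ω) + (A1 (n + 1) ω - A1 n ω)) := funext (hgdef' n)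
    rw [h0]
    exact (hWm n).div
      ((((measurable_const.add (hXm n)).add (hA2m n))).add
        (((hA1pred n).measurable).sub (hA1m n)))
  have hgnn : ∀ n ω, 0 ≤ g n ω := by
    intro n ω; rw [hgdef' n ω]
    exact div_nonneg (hWnn n ω) (by linarith [hD1 n ω, hA1inc n ω])
  have hgle : ∀ n ω, g n ω ≤ W n ω := by
    intro n ω; rw [hgdef' n ω]
    exact div_le_self (hWnn n ω) (by linarith [hD1 n ω, hA1inc n ω])
  have hMdint : ∀ n, Integrable (M (n + 1) - M n) μ := fun n =>
    (hM.integrable (n + 1)).sub (hM.integrable n)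
  have hWc0 : ∀ c : ℝ, scdStop W c 0 = fun ω => 1 + X 0 ω := by
    intro c; funext ω
    rw [scdStop_zero, hWdef' 0 ω, hPdef' 0 ω, hA20 ω]
    simp
  have hWcnn : ∀ (c : ℝ) n ω, 0 ≤ scdStop W c n ω := by
    intro c n ω
    obtain ⟨k, -, hk⟩ := scdStop_exists W c (n := n) (ω := ω)
    rw [hk]; exact hWnn k ω
  -- the stopped processes are martingales
  have hmain : ∀ c : ℝ, 0 ≤ c → Martingale (scdStop W c) ℱ μ := by
    intro c hc
    obtain ⟨S, hSdef⟩ : ∃ S' : ℕ → Set Ω,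
        S' = fun n => {ω | ∀ k, k ≤ n → W k ω ≤ c} := ⟨_, rfl⟩
    have hSdef' : ∀ n, S n = {ω | ∀ k, k ≤ n → W k ω ≤ c} := by rw [hSdef]; intro n; rfl
    have hSm : ∀ n, MeasurableSet[ℱ n] (S n) := by
      intro n
      have h0 : S n = ⋂ k, ⋂ (_ : k ≤ n), {ω | W k ω ≤ c} := by
        rw [hSdef' n]; ext ω; simp [Set.mem_iInter]
      rw [h0]
      exact MeasurableSet.iInter fun k => MeasurableSet.iInter fun hk =>
        measurableSet_le ((hWm k).mono (ℱ.mono hk) le_rfl) measurable_const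
    obtain ⟨f, hfdef⟩ : ∃ f' : ℕ → Ω → ℝ, f' = fun n => (S n).indicator (g n) := ⟨_, rfl⟩
    have hfdef' : ∀ n, f n = (S n).indicator (g n) := by rw [hfdef]; intro n; rfl
    have hfm : ∀ n, Measurable[ℱ n] (f n) := by
      intro n; rw [hfdef' n]; exact (hgm n).indicator (hSm n)
    have hfnn : ∀ n ω, 0 ≤ f n ω := by
      intro n ω; rw [hfdef' n]
      exact Set.indicator_nonneg (fun ω' _ => hgnn n ω') ω
    have hfle : ∀ n ω, f n ω ≤ c := by
      intro n ω; rw [hfdef' n]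
      by_cases h : ω ∈ S n
      · rw [Set.indicator_of_mem h]
        have hWc : W n ω ≤ c := by
          rw [hSdef' n] at h; exact h n le_rfl
        exact le_trans (hgle n ω) hWc
      · rw [Set.indicator_of_notMem h]; exact hc
    have hrec : ∀ n, scdStop W c (n + 1) = scdStop W c n + f n * (M (n + 1) - M n) := by
      intro n; funext ω
      have h2 : (fun ω' => W (n + 1) ω' - W n ω') =
          fun ω' => g n ω' * (M (n + 1) ω' - M n ω') := by
        funext ω'; rw [hkey n ω', hgdef' n ω']; ring
      calc scdStop W c (n + 1) ω
          = scdStop W c n ω +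
            Set.indicator {ω | ∀ k, k ≤ n → W k ω ≤ c}
              (fun ω' => W (n + 1) ω' - W n ω') ω := scdStop_succ_sub W c n ω
        _ = scdStop W c n ω + f n ω * (M (n + 1) ω - M n ω) := by
            rw [h2, hfdef' n, ← hSdef' n]
            by_cases h : ω ∈ S n
            · rw [Set.indicator_of_mem h, Set.indicator_of_mem h]
            · rw [Set.indicator_of_notMem h, Set.indicator_of_notMem h, zero_mul]
        _ = (scdStop W c n + f n * (M (n + 1) - M n)) ω := rfl
    have hfMint : ∀ n, Integrable (f n * (M (n + 1) - M n)) μ := by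
      intro n
      refine Integrable.mono' (((hMdint n).abs).const_mul c) ?_ ?_
      · exact (((hfm n).mono (ℱ.le n) le_rfl).mul
          (((hMm (n + 1)).mono (ℱ.le (n + 1)) le_rfl).sub
            ((hMm n).mono (ℱ.le n) le_rfl))).aestronglyMeasurable
      · refine ae_of_all _ fun ω => ?_
        simp only [Pi.mul_apply, Pi.sub_apply, Pi.abs_apply, Real.norm_eq_abs, abs_mul]
        have h1 : |f n ω| ≤ c := by rw [abs_of_nonneg (hfnn n ω)]; exact hfle n ω
        exact mul_le_mul_of_nonneg_right h1 (abs_nonneg _)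
    have hint : ∀ n, Integrable (scdStop W c n) μ := by
      intro n; induction n with
      | zero =>
        rw [hWc0 c]
        exact (integrable_const (1 : ℝ)).add (hXint 0)
      | succ n ih =>
        rw [hrec n]; exact ih.add (hfMint n)
    have hadp : StronglyAdapted ℱ (scdStop W c) := by
      intro n; induction n with
      | zero =>
        rw [hWc0 c]
        exact (measurable_const.add (hXm 0)).stronglyMeasurable
      | succ n ih =>
        rw [hrec n]
        exact ((ih.measurable.mono (ℱ.mono n.le_succ) le_rfl).add
          (((hfm n).mono (ℱ.mono n.le_succ) le_rfl).mul
            ((hMm (n + 1)).sub ((hMm n).mono (ℱ.mono n.le_succ) le_rfl)))).stronglyMeasurable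
    refine martingale_nat hadp hint fun i => ?_
    have h3 : μ[f i * (M (i + 1) - M i)|ℱ i] =ᵐ[μ] f i * μ[M (i + 1) - M i|ℱ i] :=
      condExp_mul_of_stronglyMeasurable_left ((hfm i).stronglyMeasurable) (hfMint i) (hMdint i)
    have h4 : μ[M (i + 1) - M i|ℱ i] =ᵐ[μ] 0 := by
      refine (condExp_sub (hM.integrable (i + 1)) (hM.integrable i) _).trans ?_
      filter_upwards [hM.condExp_ae_eq (Nat.le_succ i), hM.condExp_ae_eq (le_refl i)]
        with ω e1 e2
      simp only [Pi.sub_apply, e1, e2, sub_self, Pi.zero_apply]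
    have h1 : μ[scdStop W c (i + 1)|ℱ i] =ᵐ[μ]
        μ[scdStop W c i|ℱ i] + μ[f i * (M (i + 1) - M i)|ℱ i] := by
      rw [hrec i]; exact condExp_add (hint i) (hfMint i) _
    have h2 : μ[scdStop W c i|ℱ i] = scdStop W c i :=
      condExp_of_stronglyMeasurable (ℱ.le i) (hadp i) (hint i)
    filter_upwards [h1, h3, h4] with ω e1 e3 e4
    rw [Pi.add_apply, h2] at e1
    rw [Pi.mul_apply] at e3
    rw [e1, e3, e4, Pi.zero_apply, mul_zero, add_zero]
  -- constant expectation
  have hWc_int_eq : ∀ (c : ℝ), 0 ≤ c → ∀ n,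
      ∫ ω, scdStop W c n ω ∂μ = ∫ ω, (1 + X 0 ω) ∂μ := by
    intro c hc n
    have hmg := hmain c hc
    have he : μ[scdStop W c n|ℱ 0] =ᵐ[μ] scdStop W c 0 := hmg.condExp_ae_eq (Nat.zero_le n)
    calc ∫ ω, scdStop W c n ω ∂μ
        = ∫ ω, (μ[scdStop W c n|ℱ 0]) ω ∂μ := (integral_condExp (ℱ.le 0)).symm
      _ = ∫ ω, scdStop W c 0 ω ∂μ := integral_congr_ae he
      _ = ∫ ω, (1 + X 0 ω) ∂μ := by rw [hWc0 c]
  obtain ⟨R₀, hR₀def⟩ : ∃ R₀ : ℝ, R₀ = ∫ ω, (1 + X 0 ω) ∂μ := ⟨_, rfl⟩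
  have hR₀nn : 0 ≤ R₀ := by
    rw [hR₀def]
    refine integral_nonneg fun ω => ?_
    have := hX0 0 ω
    show (0 : ℝ) ≤ 1 + X 0 ω
    linarith
  have hsn : ∀ (c : ℝ), 0 ≤ c → ∀ n,
      eLpNorm (scdStop W c n) 1 μ = ENNReal.ofReal R₀ := by
    intro c hc n
    rw [eLpNorm_one_eq_lintegral_enorm,
      ← ofReal_integral_norm_eq_lintegral_enorm ((hmain c hc).integrable n)]
    congr 1
    rw [hR₀def, ← hWc_int_eq c hc n]
    exact integral_congr_ae (ae_of_all _ fun ω => Real.norm_of_nonneg (hWcnn c n ω))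
  -- a.s. convergence of each stopped process
  have hconv : ∀ cn : ℕ, ∀ᵐ ω ∂μ,
      ∃ l, Tendsto (fun n => scdStop W ((cn : ℝ) + 1) n ω) atTop (𝓝 l) := by
    intro cn
    have hc : (0 : ℝ) ≤ (cn : ℝ) + 1 := by positivity
    refine Submartingale.exists_ae_tendsto_of_bdd (R := R₀.toNNReal)
      ((hmain _ hc).submartingale) fun n => ?_
    rw [hsn _ hc n]
    exact le_of_eq rfl
  -- Doob maximal estimate
  have hmax : ∀ cn : ℕ,
      μ {ω | ∃ k, ((cn : ℝ) + 1) < W k ω} ≤ ENNReal.ofReal (R₀ / ((cn : ℝ) + 1)) := by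
    intro cn
    have hcpos : (0 : ℝ) < (cn : ℝ) + 1 := by positivity
    have hc : (0 : ℝ) ≤ (cn : ℝ) + 1 := hcpos.le
    have hsub : {ω | ∃ k, ((cn : ℝ) + 1) < W k ω} =
        ⋃ n, {ω | ∃ k, k ≤ n ∧ ((cn : ℝ) + 1) < W k ω} := by
      ext ω
      simp only [Set.mem_setOf_eq, Set.mem_iUnion]
      exact ⟨fun ⟨k, h⟩ => ⟨k, k, le_rfl, h⟩, fun ⟨n, k, _, h⟩ => ⟨k, h⟩⟩
    rw [hsub]
    have hmono : Monotone fun n => {ω | ∃ k, k ≤ n ∧ ((cn : ℝ) + 1) < W k ω} := by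
      intro a b hab ω ⟨k, hk, h⟩
      exact ⟨k, hk.trans hab, h⟩
    rw [hmono.directed_le.measure_iUnion]
    refine iSup_le fun n => ?_
    have hEm : MeasurableSet {ω | ∃ k, k ≤ n ∧ ((cn : ℝ) + 1) < W k ω} := by
      have h0 : {ω | ∃ k, k ≤ n ∧ ((cn : ℝ) + 1) < W k ω} =
          ⋃ k, ⋃ (_ : k ≤ n), {ω | ((cn : ℝ) + 1) < W k ω} := by
        ext ω; simp
      rw [h0]
      exact MeasurableSet.iUnion fun k => MeasurableSet.iUnion fun _ =>
        measurableSet_lt measurable_const ((hWm k).mono (ℱ.le k) le_rfl)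
    have hint' : Integrable (scdStop W ((cn : ℝ) + 1) n) μ := (hmain _ hc).integrable n
    have h5 : ((cn : ℝ) + 1) * (μ {ω | ∃ k, k ≤ n ∧ ((cn : ℝ) + 1) < W k ω}).toReal ≤
        ∫ ω in {ω | ∃ k, k ≤ n ∧ ((cn : ℝ) + 1) < W k ω}, scdStop W ((cn : ℝ) + 1) n ω ∂μ := by
      refine setIntegral_ge_of_const_le_real hEm (measure_ne_top μ _) ?_ hint'.integrableOn
      intro ω hω
      exact (lt_scdStop_of_exceed W _ hω).le
    have h6 : ∫ ω in {ω | ∃ k, k ≤ n ∧ ((cn : ℝ) + 1) < W k ω},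
        scdStop W ((cn : ℝ) + 1) n ω ∂μ ≤ ∫ ω, scdStop W ((cn : ℝ) + 1) n ω ∂μ :=
      setIntegral_le_integral hint' (ae_of_all _ fun ω => hWcnn _ n ω)
    have h7 : ∫ ω, scdStop W ((cn : ℝ) + 1) n ω ∂μ = R₀ := by
      rw [hWc_int_eq _ hc n, hR₀def]
    have h8 : (μ {ω | ∃ k, k ≤ n ∧ ((cn : ℝ) + 1) < W k ω}).toReal ≤ R₀ / ((cn : ℝ) + 1) := by
      rw [le_div_iff₀ hcpos]
      nlinarith [h5, h6, h7]
    calc μ {ω | ∃ k, k ≤ n ∧ ((cn : ℝ) + 1) < W k ω}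
        = ENNReal.ofReal (μ {ω | ∃ k, k ≤ n ∧ ((cn : ℝ) + 1) < W k ω}).toReal :=
          (ENNReal.ofReal_toReal (measure_ne_top μ _)).symm
      _ ≤ ENNReal.ofReal (R₀ / ((cn : ℝ) + 1)) := ENNReal.ofReal_le_ofReal h8
  -- the bad set is null
  have hbad : μ {ω | ∀ cn : ℕ, ∃ k, ((cn : ℝ) + 1) < W k ω} = 0 := by
    have hBle : ∀ cn : ℕ, μ {ω | ∀ cn : ℕ, ∃ k, ((cn : ℝ) + 1) < W k ω} ≤
        ENNReal.ofReal (R₀ / ((cn : ℝ) + 1)) := fun cn =>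
      le_trans (measure_mono fun ω hω => hω cn) (hmax cn)
    have h0 : Tendsto (fun cn : ℕ => R₀ / ((cn : ℝ) + 1)) atTop (𝓝 0) := by
      have := tendsto_one_div_add_atTop_nhds_zero_nat.const_mul R₀
      rw [mul_zero] at this
      refine this.congr fun n => ?_
      rw [mul_one_div]
    have htends : Tendsto (fun cn : ℕ => ENNReal.ofReal (R₀ / ((cn : ℝ) + 1))) atTop
        (𝓝 0) := by
      have := (ENNReal.continuous_ofReal.tendsto 0).comp h0
      simpa [Function.comp_def] using this
    exact le_antisymm (ge_of_tendsto' htends hBle) zero_le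
  -- assemble
  filter_upwards [ae_all_iff.2 hconv, measure_eq_zero_iff_ae_notMem.1 hbad] with ω hωconv hωbad hsum
  have hbound : ∃ cn : ℕ, ∀ k, W k ω ≤ (cn : ℝ) + 1 := by
    by_contra h
    push_neg at h
    exact hωbad fun cn => h cn
  obtain ⟨cn, hcn⟩ := hbound
  obtain ⟨l, hl⟩ := hωconv cn
  have hWl : Tendsto (fun n => W n ω) atTop (𝓝 l) := by
    refine hl.congr fun n => ?_
    exact scdStop_of_le W _ fun k _ => hcn k
  -- convergence of P
  have hPmono : Monotone fun n => P n ω := by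
    refine monotone_nat_of_le_succ fun n => ?_
    rw [hPsucc n ω]
    nlinarith [hδnn n ω, hPpos n ω]
  have hPbdd : BddAbove (Set.range fun n => P n ω) := by
    refine ⟨Real.exp (∑' i, (1 + X i ω + A2 i ω)⁻¹ * (A1 (i + 1) ω - A1 i ω)), ?_⟩
    rintro _ ⟨n, rfl⟩
    show P n ω ≤ _
    rw [hPdef' n ω]
    have h1 : ∏ i ∈ Finset.range n, (1 + (1 + X i ω + A2 i ω)⁻¹ * (A1 (i + 1) ω - A1 i ω)) ≤
        ∏ i ∈ Finset.range n, Real.exp ((1 + X i ω + A2 i ω)⁻¹ * (A1 (i + 1) ω - A1 i ω)) := by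
      refine Finset.prod_le_prod (fun i _ => by linarith [hδnn i ω]) fun i _ => ?_
      have h := Real.add_one_le_exp ((1 + X i ω + A2 i ω)⁻¹ * (A1 (i + 1) ω - A1 i ω))
      linarith
    have h2 : ∑ i ∈ Finset.range n, (1 + X i ω + A2 i ω)⁻¹ * (A1 (i + 1) ω - A1 i ω) ≤
        ∑' i, (1 + X i ω + A2 i ω)⁻¹ * (A1 (i + 1) ω - A1 i ω) :=
      hsum.sum_le_tsum _ (fun i _ => hδnn i ω)
    refine h1.trans ?_
    rw [← Real.exp_sum]
    exact Real.exp_le_exp.2 h2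
  have hPtend : Tendsto (fun n => P n ω) atTop (𝓝 (⨆ n, P n ω)) :=
    tendsto_atTop_ciSup hPmono hPbdd
  have hDtend : Tendsto (fun n => 1 + X n ω + A2 n ω) atTop (𝓝 (l * ⨆ n, P n ω)) := by
    refine (hWl.mul hPtend).congr fun n => ?_
    rw [hWdef' n ω, div_mul_cancel₀ _ (hPpos n ω).ne']
  have hA2bdd : BddAbove (Set.range fun n => A2 n ω) := by
    obtain ⟨C, hC⟩ := hDtend.bddAbove_range
    refine ⟨C, ?_⟩
    rintro _ ⟨n, rfl⟩
    have h1 : 1 + X n ω + A2 n ω ≤ C := hC (Set.mem_range_self n)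
    linarith [hX0 n ω]
  have hA2tend : Tendsto (fun n => A2 n ω) atTop (𝓝 (⨆ n, A2 n ω)) :=
    tendsto_atTop_ciSup (hA2mono ω) hA2bdd
  refine ⟨⟨(l * ⨆ n, P n ω) - 1 - ⨆ n, A2 n ω, ?_⟩, ⟨_, hA2tend⟩⟩
  refine ((hDtend.sub tendsto_const_nhds).sub hA2tend).congr fun n => ?_
  ring
end

section
/- In the setting of the preceding decomposition (X_n ≥ 0 adapted integrable, X_n = X_0 + A¹_n − A²_n + M_n with A¹, A² predictable nondecreasing starting at 0 and M a martingale with M_0 = 0, Â_n = Σ_{i=1}^n (1 + X_{i−1} + A²_{i−1})^{−1}(A¹_i − A¹_{i−1})), the following three events coincide up to a P-null set: {A¹_∞ < ∞}, {Σ_{i=1}^∞ (1 + X_{i−1})^{−1}(A¹_i − A¹_{i−1}) < ∞}, and {Â_∞ < ∞}. -/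
open MeasureTheory Filter Topology

private lemma inv_le_one'' {a : ℝ} (h : 1 ≤ a) : a⁻¹ ≤ 1 := by
  have ha : 0 < a := lt_of_lt_of_le one_pos h
  rw [← inv_one]
  exact inv_anti₀ one_pos h

private lemma aux_Q (x a1 a2 mm ahat S : ℕ → ℝ) (c : ℝ)
    (hx : ∀ n, 0 ≤ x n) (ha2 : ∀ n, 0 ≤ a2 n)
    (hstep : ∀ n, (1 + x (n + 1) + a2 (n + 1)) - (1 + x n + a2 n)
      = (a1 (n + 1) - a1 n) + (mm (n + 1) - mm n))
    (hahat : ∀ n, ahat (n + 1) = ahat n + (1 + x n + a2 n)⁻¹ * (a1 (n + 1) - a1 n))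
    (hahat0 : ahat 0 = 0) (hS0 : S 0 = 0)
    (hS : ∀ n, S (n + 1) = S n +
      (if ahat (n + 1) ≤ c then (1 + x n + a2 n)⁻¹ else 0) * (mm (n + 1) - mm n)) :
    ∀ n, (∀ i < n, ahat (i + 1) ≤ c) →
      Real.log (1 + x n + a2 n) - Real.log (1 + x 0 + a2 0) - ahat n ≤ S n := by
  have pos : ∀ n, 0 < 1 + x n + a2 n := fun n => by linarith [hx n, ha2 n]
  have step : ∀ n, Real.log (1 + x (n + 1) + a2 (n + 1)) - Real.log (1 + x n + a2 n)
      ≤ (1 + x n + a2 n)⁻¹ * (a1 (n + 1) - a1 n)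
        + (1 + x n + a2 n)⁻¹ * (mm (n + 1) - mm n) := by
    intro n
    have hlog := Real.log_le_sub_one_of_pos (div_pos (pos (n + 1)) (pos n))
    rw [Real.log_div (pos (n + 1)).ne' (pos n).ne'] at hlog
    have he : (1 + x (n + 1) + a2 (n + 1)) / (1 + x n + a2 n) - 1
        = (1 + x n + a2 n)⁻¹ * (a1 (n + 1) - a1 n)
          + (1 + x n + a2 n)⁻¹ * (mm (n + 1) - mm n) := by
      rw [div_sub_one (pos n).ne', hstep n]
      ring
    rw [he] at hlog
    exact hlog
  intro n
  induction n with
  | zero => intro _; rw [hahat0, hS0]; simp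
  | succ n ih =>
    intro hyp
    have hn : ahat (n + 1) ≤ c := hyp n (Nat.lt_succ_self n)
    have ihn := ih fun i hi => hyp i (hi.trans (Nat.lt_succ_self n))
    rw [hS n, if_pos hn, hahat n]
    have := step n
    linarith

private lemma aux_lower (x a1 a2 mm ahat S : ℕ → ℝ) (c : ℝ) (hc : 0 ≤ c)
    (hx : ∀ n, 0 ≤ x n) (ha2 : ∀ n, 0 ≤ a2 n)
    (ha1m : ∀ n, a1 n ≤ a1 (n + 1))
    (hstep : ∀ n, (1 + x (n + 1) + a2 (n + 1)) - (1 + x n + a2 n)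
      = (a1 (n + 1) - a1 n) + (mm (n + 1) - mm n))
    (hahat : ∀ n, ahat (n + 1) = ahat n + (1 + x n + a2 n)⁻¹ * (a1 (n + 1) - a1 n))
    (hahat0 : ahat 0 = 0) (hS0 : S 0 = 0)
    (hS : ∀ n, S (n + 1) = S n +
      (if ahat (n + 1) ≤ c then (1 + x n + a2 n)⁻¹ else 0) * (mm (n + 1) - mm n)) :
    ∀ n, -(c + Real.log (1 + x 0 + a2 0)) ≤ S n := by
  have pos : ∀ n, 0 < 1 + x n + a2 n := fun n => by linarith [hx n, ha2 n]
  have hQ := aux_Q x a1 a2 mm ahat S c hx ha2 hstep hahat hahat0 hS0 hS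
  have hy : ∀ n, 0 ≤ Real.log (1 + x n + a2 n) := fun n =>
    Real.log_nonneg (by linarith [hx n, ha2 n])
  have hmono : Monotone ahat := monotone_nat_of_le_succ fun n => by
    have h0 : 0 ≤ (1 + x n + a2 n)⁻¹ * (a1 (n + 1) - a1 n) :=
      mul_nonneg (inv_nonneg.2 (pos n).le) (sub_nonneg.2 (ha1m n))
    rw [hahat n]; linarith
  intro n
  induction n with
  | zero => rw [hS0]; linarith [hy 0]
  | succ n ih =>
    by_cases hP : ahat (n + 1) ≤ c
    · have hq := hQ (n + 1) fun i hi => le_trans (hmono (Nat.succ_le_of_lt hi)) hP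
      linarith [hy (n + 1)]
    · rw [hS n, if_neg hP, zero_mul, add_zero]
      exact ih

private lemma aux_conv (x a1 a2 mm ahat S : ℕ → ℝ) (c B : ℝ)
    (hx : ∀ n, 0 ≤ x n) (ha2 : ∀ n, 0 ≤ a2 n)
    (ha1m : ∀ n, a1 n ≤ a1 (n + 1)) (ha10 : a1 0 = 0)
    (hstep : ∀ n, (1 + x (n + 1) + a2 (n + 1)) - (1 + x n + a2 n)
      = (a1 (n + 1) - a1 n) + (mm (n + 1) - mm n))
    (hahat0 : ahat 0 = 0)
    (hahat : ∀ n, ahat (n + 1) = ahat n + (1 + x n + a2 n)⁻¹ * (a1 (n + 1) - a1 n))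
    (hS0 : S 0 = 0)
    (hS : ∀ n, S (n + 1) = S n +
      (if ahat (n + 1) ≤ c then (1 + x n + a2 n)⁻¹ else 0) * (mm (n + 1) - mm n))
    (hcb : ∀ n, ahat n ≤ c) (hB : ∀ n, S n ≤ B) :
    ∃ l, Tendsto a1 atTop (𝓝 l) := by
  have pos : ∀ n, 0 < 1 + x n + a2 n := fun n => by linarith [hx n, ha2 n]
  have hQ := aux_Q x a1 a2 mm ahat S c hx ha2 hstep hahat hahat0 hS0 hS
  set D := Real.log (1 + x 0 + a2 0) + c + B with hD
  have hyD : ∀ n, Real.log (1 + x n + a2 n) ≤ D := by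
    intro n
    have := hQ n fun i _ => hcb (i + 1)
    have h1 := hcb n
    have h2 := hB n
    rw [hD]; linarith
  have hbase : ∀ n, 1 + x n + a2 n ≤ Real.exp D := fun n => by
    rw [← Real.exp_log (pos n)]
    exact Real.exp_le_exp.2 (hyD n)
  have hsum : ∀ n, ahat n = ∑ i ∈ Finset.range n, (1 + x i + a2 i)⁻¹ * (a1 (i + 1) - a1 i) := by
    intro n
    induction n with
    | zero => simpa using hahat0
    | succ n ih => rw [Finset.sum_range_succ, ← ih, hahat n]
  have hbnd : ∀ n, a1 n ≤ Real.exp D * c := by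
    intro n
    have h1 : a1 n = ∑ i ∈ Finset.range n, (a1 (i + 1) - a1 i) := by
      rw [Finset.sum_range_sub a1 n, ha10, sub_zero]
    rw [h1]
    calc ∑ i ∈ Finset.range n, (a1 (i + 1) - a1 i)
        ≤ ∑ i ∈ Finset.range n, Real.exp D * ((1 + x i + a2 i)⁻¹ * (a1 (i + 1) - a1 i)) := by
          refine Finset.sum_le_sum fun i _ => ?_
          calc a1 (i + 1) - a1 i
              = (1 + x i + a2 i) * ((1 + x i + a2 i)⁻¹ * (a1 (i + 1) - a1 i)) := by
                rw [← mul_assoc, mul_inv_cancel₀ (pos i).ne', one_mul]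
            _ ≤ Real.exp D * ((1 + x i + a2 i)⁻¹ * (a1 (i + 1) - a1 i)) :=
                mul_le_mul_of_nonneg_right (hbase i)
                  (mul_nonneg (inv_nonneg.2 (pos i).le) (sub_nonneg.2 (ha1m i)))
      _ = Real.exp D * ahat n := by rw [← Finset.mul_sum, ← hsum n]
      _ ≤ Real.exp D * c := mul_le_mul_of_nonneg_left (hcb n) (Real.exp_pos D).le
  exact ⟨_, tendsto_atTop_ciSup (monotone_nat_of_le_succ ha1m)
    ⟨Real.exp D * c, by rintro y ⟨n, rfl⟩; exact hbnd n⟩⟩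

/-- Discrete-time form of Corollary 1.1: in the decomposition
`X_n = X_0 + A¹_n − A²_n + M_n` (with `X ≥ 0` adapted integrable, `A¹, A²` predictable
nondecreasing starting at `0`, `M` a martingale with `M_0 = 0`), the events `{A¹_∞ < ∞}`,
`{Σ (1 + X_{i−1})⁻¹ (A¹_i − A¹_{i−1}) < ∞}` and
`{Σ (1 + X_{i−1} + A²_{i−1})⁻¹ (A¹_i − A¹_{i−1}) < ∞}` coincide up to a `P`-null set. -/
theorem convergence_sets_coincide_discrete
    {Ω : Type*} {m : MeasurableSpace Ω} {μ : Measure Ω} [IsProbabilityMeasure μ]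
    (ℱ : Filtration ℕ m)
    (X M A1 A2 : ℕ → Ω → ℝ)
    (hXadp : Adapted ℱ X) (hX0 : ∀ n ω, 0 ≤ X n ω) (hXint : ∀ n, Integrable (X n) μ)
    (hA1mono : ∀ ω, Monotone fun n => A1 n ω) (hA2mono : ∀ ω, Monotone fun n => A2 n ω)
    (hA10 : ∀ ω, A1 0 ω = 0) (hA20 : ∀ ω, A2 0 ω = 0)
    (hA1pred : ∀ n : ℕ, StronglyMeasurable[ℱ n] (A1 (n + 1)))
    (hA2pred : ∀ n : ℕ, StronglyMeasurable[ℱ n] (A2 (n + 1)))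
    (hM : Martingale M ℱ μ) (hM0 : ∀ ω, M 0 ω = 0)
    (hdecomp : ∀ n ω, X n ω = X 0 ω + A1 n ω - A2 n ω + M n ω) :
    ∀ᵐ ω ∂μ,
      ((∃ l : ℝ, Tendsto (fun n => A1 n ω) atTop (𝓝 l)) ↔
        Summable fun i => (1 + X i ω)⁻¹ * (A1 (i + 1) ω - A1 i ω)) ∧
      ((Summable fun i => (1 + X i ω)⁻¹ * (A1 (i + 1) ω - A1 i ω)) ↔
        Summable fun i => (1 + X i ω + A2 i ω)⁻¹ * (A1 (i + 1) ω - A1 i ω)) := by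
  have hA2nn : ∀ n ω, 0 ≤ A2 n ω := fun n ω => (hA20 ω) ▸ hA2mono ω (Nat.zero_le n)
  have hpos : ∀ n ω, 0 < 1 + X n ω + A2 n ω := fun n ω => by
    linarith [hX0 n ω, hA2nn n ω]
  set Ahat : ℕ → Ω → ℝ := fun n ω =>
    ∑ i ∈ Finset.range n, (1 + X i ω + A2 i ω)⁻¹ * (A1 (i + 1) ω - A1 i ω) with hAhatdef
  -- measurability preliminaries
  have mX : ∀ n, Measurable[ℱ n] (X n) := fun n => hXadp n
  have mA1 : ∀ n, Measurable[ℱ n] (A1 n) := by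
    intro n
    cases n with
    | zero =>
      have h : A1 0 = fun _ => (0 : ℝ) := funext hA10
      rw [h]; exact measurable_const
    | succ k => exact ((hA1pred k).measurable).mono (ℱ.mono k.le_succ) le_rfl
  have mA2 : ∀ n, Measurable[ℱ n] (A2 n) := by
    intro n
    cases n with
    | zero =>
      have h : A2 0 = fun _ => (0 : ℝ) := funext hA20
      rw [h]; exact measurable_const
    | succ k => exact ((hA2pred k).measurable).mono (ℱ.mono k.le_succ) le_rfl
  have mHi : ∀ n, Measurable[ℱ n] (fun ω => (1 + X n ω + A2 n ω)⁻¹) := fun n =>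
    (((mX n).const_add 1).add (mA2 n)).inv
  have mAhat : ∀ n, Measurable[ℱ n] (Ahat (n + 1)) := by
    intro n
    simp only [hAhatdef]
    apply Finset.measurable_sum
    intro i hi
    rw [Finset.mem_range, Nat.lt_succ_iff] at hi
    exact ((mHi i).mono (ℱ.mono hi) le_rfl).mul
      ((((hA1pred i).measurable).mono (ℱ.mono hi) le_rfl).sub
        ((mA1 i).mono (ℱ.mono hi) le_rfl))
  -- pointwise decomposition step and recurrences
  have hstepω : ∀ n ω, (1 + X (n + 1) ω + A2 (n + 1) ω) - (1 + X n ω + A2 n ω)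
      = (A1 (n + 1) ω - A1 n ω) + (M (n + 1) ω - M n ω) := by
    intro n ω
    have h1 := hdecomp (n + 1) ω
    have h2 := hdecomp n ω
    linarith
  have hAhat0 : ∀ ω, Ahat 0 ω = 0 := fun ω => by simp [hAhatdef]
  have hAhatrec : ∀ n ω, Ahat (n + 1) ω
      = Ahat n ω + (1 + X n ω + A2 n ω)⁻¹ * (A1 (n + 1) ω - A1 n ω) := by
    intro n ω
    simp [hAhatdef, Finset.sum_range_succ]
  -- the key a.e. implication, for each level c
  have key : ∀ c : ℕ, ∀ᵐ ω ∂μ,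
      (∀ n, Ahat n ω ≤ (c : ℝ)) → ∃ l, Tendsto (fun n => A1 n ω) atTop (𝓝 l) := by
    intro c
    set ξ : ℕ → Ω → ℝ := fun i ω =>
      if Ahat (i + 1) ω ≤ (c : ℝ) then (1 + X i ω + A2 i ω)⁻¹ else 0 with hξdef
    set N : ℕ → Ω → ℝ := fun n => ∑ k ∈ Finset.range n, ξ k * (M (k + 1) - M k) with hNdef
    have hξadp : StronglyAdapted ℱ ξ := by
      intro i
      apply Measurable.stronglyMeasurable
      exact Measurable.ite (measurableSet_le (mAhat i) measurable_const)
        (mHi i) measurable_const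
    have hbdd1 : ∀ n ω, ξ n ω ≤ (1 : ℝ) := by
      intro n ω
      simp only [hξdef]
      split
      · exact inv_le_one'' (by linarith [hX0 n ω, hA2nn n ω])
      · norm_num
    have hnn : ∀ n ω, 0 ≤ ξ n ω := by
      intro n ω
      simp only [hξdef]
      split
      · exact inv_nonneg.2 (hpos n ω).le
      · exact le_refl 0
    have hNsub : Submartingale N ℱ μ := by
      rw [hNdef]
      exact hM.submartingale.sum_mul_sub hξadp hbdd1 hnn
    have hNneg : Submartingale (-N) ℱ μ := by
      have h1 := hM.neg.submartingale.sum_mul_sub hξadp hbdd1 hnn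
      have h2 : (fun n => ∑ k ∈ Finset.range n, ξ k * ((-M) (k + 1) - (-M) k)) = -N := by
        funext n ω
        simp only [hNdef, Pi.neg_apply, Finset.sum_apply, Pi.mul_apply, Pi.sub_apply]
        rw [← Finset.sum_neg_distrib]
        exact Finset.sum_congr rfl fun k _ => by ring
      rwa [h2] at h1
    have hNmart : Martingale N ℱ μ := by
      have h4 := hNneg.neg
      rw [neg_neg] at h4
      exact martingale_iff.2 ⟨h4, hNsub⟩
    have hN0 : ∀ ω, N 0 ω = 0 := fun ω => by simp [hNdef]
    have hNrec : ∀ n ω, N (n + 1) ω = N n ω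
        + (if Ahat (n + 1) ω ≤ (c : ℝ) then (1 + X n ω + A2 n ω)⁻¹ else 0)
          * (M (n + 1) ω - M n ω) := by
      intro n ω
      simp [hNdef, hξdef, Finset.sum_apply, Finset.sum_range_succ]
    -- lower bound on N
    have hlb : ∀ n ω, -((c : ℝ) + Real.log (1 + X 0 ω + A2 0 ω)) ≤ N n ω := by
      intro n ω
      exact aux_lower (fun k => X k ω) (fun k => A1 k ω) (fun k => A2 k ω)
        (fun k => M k ω) (fun k => Ahat k ω) (fun k => N k ω) (c : ℝ)
        (Nat.cast_nonneg c) (fun k => hX0 k ω) (fun k => hA2nn k ω)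
        (fun k => hA1mono ω (Nat.le_succ k)) (fun k => hstepω k ω)
        (fun k => hAhatrec k ω) (hAhat0 ω) (hN0 ω) (fun k => hNrec k ω) n
    -- L¹ bound
    set Rv : ℝ := 2 * ((c : ℝ) + ∫ ω, X 0 ω ∂μ) with hRv
    have hb : ∀ n ω, ‖N n ω‖ ≤ N n ω + 2 * ((c : ℝ) + X 0 ω) := by
      intro n ω
      have hp : (0 : ℝ) < 1 + X 0 ω + A2 0 ω := hpos 0 ω
      have hlog1 : Real.log (1 + X 0 ω + A2 0 ω) ≤ X 0 ω := by
        have h1 := Real.log_le_sub_one_of_pos hp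
        have h2 := hA20 ω
        linarith
      have hlog0 : 0 ≤ Real.log (1 + X 0 ω + A2 0 ω) :=
        Real.log_nonneg (by linarith [hX0 0 ω, hA2nn 0 ω])
      have h3 := hlb n ω
      have h4 : (0 : ℝ) ≤ (c : ℝ) := Nat.cast_nonneg c
      rw [Real.norm_eq_abs]
      rcases abs_cases (N n ω) with ⟨h, h'⟩ | ⟨h, h'⟩ <;> rw [h] <;> linarith
    have hE0 : ∀ n, ∫ ω, N n ω ∂μ = 0 := by
      intro n
      have h := hNmart.setIntegral_eq (Nat.zero_le n) (MeasurableSet.univ)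
      rw [setIntegral_univ, setIntegral_univ] at h
      rw [← h]
      simp [hN0]
    have hnorm : ∀ n, ∫ ω, ‖N n ω‖ ∂μ ≤ Rv := by
      intro n
      have hint := hNsub.integrable n
      have h1 : Integrable (fun ω => (c : ℝ) + X 0 ω) μ := (integrable_const _).add (hXint 0)
      have hg : Integrable (fun ω => N n ω + 2 * ((c : ℝ) + X 0 ω)) μ :=
        hint.add (h1.const_mul 2)
      calc ∫ ω, ‖N n ω‖ ∂μ ≤ ∫ ω, (N n ω + 2 * ((c : ℝ) + X 0 ω)) ∂μ :=
            integral_mono hint.norm hg (hb n)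
        _ = (∫ ω, N n ω ∂μ) + 2 * ((c : ℝ) + ∫ ω, X 0 ω ∂μ) := by
            rw [integral_add hint (h1.const_mul 2), integral_const_mul,
              integral_add (integrable_const _) (hXint 0), integral_const]
            simp
        _ = Rv := by rw [hE0 n, hRv]; ring
    have hsnorm : ∀ n, eLpNorm (N n) 1 μ ≤ ENNReal.ofReal Rv := by
      intro n
      rw [eLpNorm_one_eq_lintegral_enorm,
        ← ofReal_integral_norm_eq_lintegral_enorm (hNsub.integrable n)]
      exact ENNReal.ofReal_le_ofReal (hnorm n)
    have hconv := hNsub.exists_ae_tendsto_of_bdd (R := Rv.toNNReal)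
      (fun n => by simpa [ENNReal.ofReal] using hsnorm n)
    filter_upwards [hconv] with ω hω hbound
    obtain ⟨l, hl⟩ := hω
    obtain ⟨B, hB⟩ := hl.bddAbove_range
    exact aux_conv (fun k => X k ω) (fun k => A1 k ω) (fun k => A2 k ω)
      (fun k => M k ω) (fun k => Ahat k ω) (fun k => N k ω) (c : ℝ) B
      (fun k => hX0 k ω) (fun k => hA2nn k ω) (fun k => hA1mono ω (Nat.le_succ k))
      (hA10 ω) (fun k => hstepω k ω) (hAhat0 ω) (fun k => hAhatrec k ω)
      (hN0 ω) (fun k => hNrec k ω) hbound (fun k => hB ⟨k, rfl⟩)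
  have keyall : ∀ᵐ ω ∂μ, ∀ c : ℕ,
      (∀ n, Ahat n ω ≤ (c : ℝ)) → ∃ l, Tendsto (fun n => A1 n ω) atTop (𝓝 l) :=
    ae_all_iff.2 key
  filter_upwards [keyall] with ω hω
  have hΔ : ∀ i, 0 ≤ A1 (i + 1) ω - A1 i ω := fun i =>
    sub_nonneg.2 (hA1mono ω (Nat.le_succ i))
  have hp1 : ∀ i, (0 : ℝ) < 1 + X i ω := fun i => by linarith [hX0 i ω]
  have h31 : (Summable fun i => (1 + X i ω + A2 i ω)⁻¹ * (A1 (i + 1) ω - A1 i ω)) →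
      ∃ l, Tendsto (fun n => A1 n ω) atTop (𝓝 l) := by
    intro h3
    have hnn : ∀ i, 0 ≤ (1 + X i ω + A2 i ω)⁻¹ * (A1 (i + 1) ω - A1 i ω) := fun i =>
      mul_nonneg (inv_nonneg.2 (hpos i ω).le) (hΔ i)
    refine hω ⌈∑' i, (1 + X i ω + A2 i ω)⁻¹ * (A1 (i + 1) ω - A1 i ω)⌉₊ fun n => ?_
    have h4 : Ahat n ω ≤ ∑' i, (1 + X i ω + A2 i ω)⁻¹ * (A1 (i + 1) ω - A1 i ω) := by
      simp only [hAhatdef]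
      exact Summable.sum_le_tsum (Finset.range n) (fun i _ => hnn i) h3
    exact h4.trans (Nat.le_ceil _)
  have h12 : (∃ l, Tendsto (fun n => A1 n ω) atTop (𝓝 l)) →
      Summable fun i => (1 + X i ω)⁻¹ * (A1 (i + 1) ω - A1 i ω) := by
    rintro ⟨l, hl⟩
    refine summable_of_sum_range_le (c := l)
      (fun i => mul_nonneg (inv_nonneg.2 (hp1 i).le) (hΔ i)) fun n => ?_
    calc ∑ i ∈ Finset.range n, (1 + X i ω)⁻¹ * (A1 (i + 1) ω - A1 i ω)
        ≤ ∑ i ∈ Finset.range n, (A1 (i + 1) ω - A1 i ω) := by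
          refine Finset.sum_le_sum fun i _ => ?_
          exact mul_le_of_le_one_left (hΔ i) (inv_le_one'' (by linarith [hX0 i ω]))
      _ = A1 n ω - A1 0 ω := Finset.sum_range_sub (fun i => A1 i ω) n
      _ ≤ l := by
          rw [hA10 ω, sub_zero]
          exact (hA1mono ω).ge_of_tendsto hl n
  have h23 : (Summable fun i => (1 + X i ω)⁻¹ * (A1 (i + 1) ω - A1 i ω)) →
      Summable fun i => (1 + X i ω + A2 i ω)⁻¹ * (A1 (i + 1) ω - A1 i ω) := by
    intro h2
    refine h2.of_nonneg_of_le
      (fun i => mul_nonneg (inv_nonneg.2 (hpos i ω).le) (hΔ i)) fun i => ?_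
    have h5 : (1 + X i ω + A2 i ω)⁻¹ ≤ (1 + X i ω)⁻¹ := by
      apply inv_anti₀ (hp1 i)
      linarith [hA2nn i ω]
    exact mul_le_mul_of_nonneg_right h5 (hΔ i)
  exact ⟨⟨h12, fun h2 => h31 (h23 h2)⟩, h23, fun h3 => h12 (h31 h3)⟩
end

section
/- Let γ: [0,∞) → (0,∞) be a nondecreasing right-continuous function with γ_0 = 1. Denote Δγ_s = γ_s − γ_{s−} (with γ_{0−} = 1), and let γ^c_t = γ_t − Σ_{0<s≤t} Δγ_s be its continuous part. Then for every δ with 0 < δ < 1 and every t ≥ 0: γ_t^δ = exp( δ ∫_{(0,t]} γ_s^{−1} dγ^c_s ) · Π_{0<s≤t} (1 − Δγ_s/γ_s)^{−δ}, where the (countable) product is over the jump times of γ in (0,t]. -/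
open MeasureTheory Set Filter Topology

noncomputable section RpowDoleansAux

/-- The set of jump points of `γ`. -/
private def jumpSet (γ : StieltjesFunction ℝ) : Set ℝ := {s | Function.leftLim γ s ≠ γ s}

private lemma jumpSet_countable (γ : StieltjesFunction ℝ) : (jumpSet γ).Countable := by
  apply ((γ.mono.monotoneOn univ).countable_not_continuousWithinAt_Iio).mono
  intro x hx
  exact ⟨mem_univ x, fun h => hx (γ.mono.continuousWithinAt_Iio_iff_leftLim_eq.1 (by simpa using h))⟩

private lemma leftLim_le_self (γ : StieltjesFunction ℝ) (s : ℝ) :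
    Function.leftLim γ s ≤ γ s := γ.mono.leftLim_le le_rfl

private lemma one_le_leftLim (γ : StieltjesFunction ℝ) (h1 : ∀ s, 1 ≤ γ s) (s : ℝ) :
    1 ≤ Function.leftLim γ s :=
  le_trans (h1 (s - 1)) (γ.mono.le_leftLim (by linarith))

private lemma log_sub_log_le {x y : ℝ} (hx : 0 < x) (hxy : x ≤ y) :
    Real.log y - Real.log x ≤ (y - x) / x := by
  have hy : 0 < y := hx.trans_le hxy
  have h := Real.log_le_sub_one_of_pos (show (0:ℝ) < y / x by positivity)
  rw [Real.log_div hy.ne' hx.ne'] at h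
  have : y / x - 1 = (y - x) / x := by field_simp
  linarith [this ▸ h]

private lemma le_log_sub_log {x y : ℝ} (hx : 0 < x) (hxy : x ≤ y) :
    (y - x) / y ≤ Real.log y - Real.log x := by
  have hy : 0 < y := hx.trans_le hxy
  have h := Real.log_le_sub_one_of_pos (show (0:ℝ) < x / y by positivity)
  rw [Real.log_div hx.ne' hy.ne'] at h
  have h2 : x / y - 1 = -((y - x) / y) := by field_simp; ring
  rw [h2] at h
  linarith

/-- The jump correction term. -/
private def cfun (γ : StieltjesFunction ℝ) (s : ℝ) : ℝ :=
  Real.log (γ s) - Real.log (Function.leftLim γ s) - (γ s - Function.leftLim γ s) / γ s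

private lemma cfun_nonneg (γ : StieltjesFunction ℝ) (h1 : ∀ s, 1 ≤ γ s) (s : ℝ) :
    0 ≤ cfun γ s := by
  have hl : (0:ℝ) < Function.leftLim γ s := lt_of_lt_of_le one_pos (one_le_leftLim γ h1 s)
  have := le_log_sub_log hl (leftLim_le_self γ s)
  unfold cfun; linarith

private lemma cfun_le (γ : StieltjesFunction ℝ) (h1 : ∀ s, 1 ≤ γ s) (s : ℝ) :
    cfun γ s ≤ (γ s - Function.leftLim γ s) ^ 2 := by
  set l := Function.leftLim γ s with hl
  have h1l : (1:ℝ) ≤ l := one_le_leftLim γ h1 s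
  have hlg : l ≤ γ s := leftLim_le_self γ s
  have hlpos : (0:ℝ) < l := lt_of_lt_of_le one_pos h1l
  have hgpos : (0:ℝ) < γ s := lt_of_lt_of_le one_pos (h1 s)
  have h := log_sub_log_le hlpos hlg
  have key : (γ s - l) / l - (γ s - l) / γ s ≤ (γ s - l) ^ 2 := by
    rw [div_sub_div _ _ hlpos.ne' hgpos.ne', div_le_iff₀ (by positivity)]
    have hge1 : (1:ℝ) ≤ l * γ s := by nlinarith
    nlinarith [sq_nonneg (γ s - l), hge1]
  unfold cfun; linarith

private def nu (γ : StieltjesFunction ℝ) : Measure ℝ :=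
  γ.measure.withDensity fun s => ENNReal.ofReal (γ s)⁻¹

private lemma nu_apply (γ : StieltjesFunction ℝ) {A : Set ℝ} (hA : MeasurableSet A) :
    nu γ A = ∫⁻ s in A, ENNReal.ofReal (γ s)⁻¹ ∂γ.measure :=
  withDensity_apply _ hA

private lemma measure_countable_eq_tsum (μ : Measure ℝ) {E : Set ℝ} (hE : E.Countable) :
    μ E = ∑' x : E, μ {(x : ℝ)} := by
  conv_lhs => rw [← Set.biUnion_of_singleton E]
  exact measure_biUnion hE (fun x _ y _ hxy => by simpa using hxy)
    fun x _ => measurableSet_singleton x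

private lemma nu_singleton (γ : StieltjesFunction ℝ) (h1 : ∀ s, 1 ≤ γ s) (x : ℝ) :
    nu γ {x} = ENNReal.ofReal ((γ x - Function.leftLim γ x) / γ x) := by
  have hgpos : (0:ℝ) < γ x := lt_of_lt_of_le one_pos (h1 x)
  rw [nu_apply γ (measurableSet_singleton x), Measure.restrict_singleton,
    lintegral_smul_measure, lintegral_dirac' _ (f := fun a => ENNReal.ofReal (γ a)⁻¹) (γ.mono.measurable.inv.ennreal_ofReal),
    γ.measure_singleton, smul_eq_mul, ← ENNReal.ofReal_mul (sub_nonneg.2 (leftLim_le_self γ x)),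
    mul_comm, inv_mul_eq_div]

private lemma nu_Ioc_le (γ : StieltjesFunction ℝ) (h1 : ∀ s, 1 ≤ γ s) {u v : ℝ} (huv : u ≤ v) :
    nu γ (Ioc u v) ≤ ENNReal.ofReal ((γ v - γ u) / γ u) := by
  have hgu : (0:ℝ) < γ u := lt_of_lt_of_le one_pos (h1 u)
  rw [nu_apply γ measurableSet_Ioc]
  calc ∫⁻ s in Ioc u v, ENNReal.ofReal (γ s)⁻¹ ∂γ.measure
      ≤ ∫⁻ _ in Ioc u v, ENNReal.ofReal (γ u)⁻¹ ∂γ.measure := by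
        apply setLIntegral_mono' measurableSet_Ioc
        intro s hs
        apply ENNReal.ofReal_le_ofReal
        exact inv_anti₀ hgu (γ.mono hs.1.le)
    _ = ENNReal.ofReal (γ u)⁻¹ * ENNReal.ofReal (γ v - γ u) := by
        rw [setLIntegral_const, γ.measure_Ioc]
    _ = ENNReal.ofReal ((γ v - γ u) / γ u) := by
        rw [← ENNReal.ofReal_mul (by positivity), inv_mul_eq_div]

private lemma nu_Ioc_ge (γ : StieltjesFunction ℝ) (h1 : ∀ s, 1 ≤ γ s) {u v : ℝ} (huv : u ≤ v) :
    ENNReal.ofReal ((γ v - γ u) / γ v) ≤ nu γ (Ioc u v) := by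
  have hgv : (0:ℝ) < γ v := lt_of_lt_of_le one_pos (h1 v)
  rw [nu_apply γ measurableSet_Ioc]
  calc ENNReal.ofReal ((γ v - γ u) / γ v)
      = ENNReal.ofReal (γ v)⁻¹ * ENNReal.ofReal (γ v - γ u) := by
        rw [← ENNReal.ofReal_mul (by positivity), inv_mul_eq_div]
    _ = ∫⁻ _ in Ioc u v, ENNReal.ofReal (γ v)⁻¹ ∂γ.measure := by
        rw [setLIntegral_const, γ.measure_Ioc]
    _ ≤ ∫⁻ s in Ioc u v, ENNReal.ofReal (γ s)⁻¹ ∂γ.measure := by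
        apply setLIntegral_mono' measurableSet_Ioc
        intro s hs
        apply ENNReal.ofReal_le_ofReal
        exact inv_anti₀ (lt_of_lt_of_le one_pos (h1 s)) (γ.mono hs.2)

private def rho (γ : StieltjesFunction ℝ) : Measure ℝ :=
  Measure.sum fun s : (jumpSet γ) => ENNReal.ofReal (cfun γ s) • Measure.dirac (s : ℝ)

private lemma rho_apply (γ : StieltjesFunction ℝ) {A : Set ℝ} (hA : MeasurableSet A) :
    rho γ A = ∑' x : ↥(jumpSet γ ∩ A), ENNReal.ofReal (cfun γ x) := by
  rw [rho, Measure.sum_apply _ hA]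
  have h : ∀ s : jumpSet γ,
      (ENNReal.ofReal (cfun γ s) • Measure.dirac (s : ℝ)) A
        = (A.indicator fun x => ENNReal.ofReal (cfun γ x)) (s : ℝ) := by
    intro s
    rw [Measure.smul_apply, Measure.dirac_apply' _ hA, smul_eq_mul]
    by_cases h : (s : ℝ) ∈ A
    · simp [Set.indicator_of_mem h]
    · simp [Set.indicator_of_notMem h]
  rw [tsum_congr h, tsum_subtype, Set.indicator_indicator, ← tsum_subtype]



private lemma rho_Ioc_le (γ : StieltjesFunction ℝ) (h1 : ∀ s, 1 ≤ γ s) {u v : ℝ} (huv : u ≤ v) :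
    rho γ (Ioc u v) ≤ ENNReal.ofReal ((γ v - γ u) ^ 2) := by
  rw [rho_apply γ measurableSet_Ioc]
  have hE : (jumpSet γ ∩ Ioc u v).Countable := (jumpSet_countable γ).mono inter_subset_left
  calc (∑' x : ↥(jumpSet γ ∩ Ioc u v), ENNReal.ofReal (cfun γ x))
      ≤ ∑' x : ↥(jumpSet γ ∩ Ioc u v), ENNReal.ofReal (γ v - γ u) * γ.measure {(x : ℝ)} := by
        apply ENNReal.tsum_le_tsum
        intro x
        obtain ⟨hxJ, hxI⟩ := x.2
        have hll : Function.leftLim γ u ≤ Function.leftLim γ (x : ℝ) := γ.mono.leftLim hxI.1.le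
        have hul : γ u ≤ Function.leftLim γ (x : ℝ) := γ.mono.le_leftLim hxI.1
        have hgx : γ (x : ℝ) ≤ γ v := γ.mono hxI.2
        have hlx : Function.leftLim γ (x : ℝ) ≤ γ (x : ℝ) := leftLim_le_self γ _
        have hc := cfun_le γ h1 (x : ℝ)
        rw [γ.measure_singleton, ← ENNReal.ofReal_mul (by linarith)]
        apply ENNReal.ofReal_le_ofReal
        nlinarith
    _ = ENNReal.ofReal (γ v - γ u) * ∑' x : ↥(jumpSet γ ∩ Ioc u v), γ.measure {(x : ℝ)} :=
        ENNReal.tsum_mul_left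
    _ ≤ ENNReal.ofReal (γ v - γ u) * γ.measure (Ioc u v) := by
        apply mul_le_mul_right
        rw [← measure_countable_eq_tsum γ.measure hE]
        exact measure_mono inter_subset_right
    _ ≤ ENNReal.ofReal (γ v - γ u) * ENNReal.ofReal (γ v - γ u) := by
        rw [γ.measure_Ioc]
    _ = ENNReal.ofReal ((γ v - γ u) ^ 2) := by
        rw [← ENNReal.ofReal_mul (by linarith [γ.mono huv]), sq]

private lemma nu_ne_top (γ : StieltjesFunction ℝ) (h1 : ∀ s, 1 ≤ γ s) {E : Set ℝ} {u v : ℝ}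
    (huv : u ≤ v) (hE : E ⊆ Ioc u v) : nu γ E ≠ ⊤ :=
  ((measure_mono hE).trans_lt ((nu_Ioc_le γ h1 huv).trans_lt ENNReal.ofReal_lt_top)).ne

private lemma rho_ne_top (γ : StieltjesFunction ℝ) (h1 : ∀ s, 1 ≤ γ s) {E : Set ℝ} {u v : ℝ}
    (huv : u ≤ v) (hE : E ⊆ Ioc u v) : rho γ E ≠ ⊤ :=
  ((measure_mono hE).trans_lt ((rho_Ioc_le γ h1 huv).trans_lt ENNReal.ofReal_lt_top)).ne

private lemma rho_singleton (γ : StieltjesFunction ℝ) (h1 : ∀ s, 1 ≤ γ s) (w : ℝ) :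
    rho γ {w} = ENNReal.ofReal (cfun γ w) := by
  rw [rho_apply γ (measurableSet_singleton w)]
  by_cases hw : w ∈ jumpSet γ
  · have h : jumpSet γ ∩ {w} = {w} := inter_eq_self_of_subset_right (by simpa using hw)
    rw [h]
    simpa using tsum_singleton w (fun y => ENNReal.ofReal (cfun γ y))
  · have h : jumpSet γ ∩ {w} = (∅ : Set ℝ) := by
      ext x; simp only [mem_inter_iff, mem_singleton_iff, mem_empty_iff_false, iff_false]
      rintro ⟨hx, rfl⟩; exact hw hx
    have hcw : cfun γ w = 0 := by
      have : Function.leftLim γ w = γ w := not_ne_iff.1 hw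
      simp [cfun, this]
    rw [h, hcw]
    simp

/-- at a point `w`, the atoms of `nu + rho` account exactly for the jump of `log ∘ γ`. -/
private lemma atom_identity (γ : StieltjesFunction ℝ) (h1 : ∀ s, 1 ≤ γ s) (w : ℝ) :
    Real.log (γ w) - Real.log (Function.leftLim γ w)
      = (nu γ {w}).toReal + (rho γ {w}).toReal := by
  have hgpos : (0:ℝ) < γ w := lt_of_lt_of_le one_pos (h1 w)
  have hll : Function.leftLim γ w ≤ γ w := leftLim_le_self γ w
  rw [nu_singleton γ h1 w, rho_singleton γ h1 w,
    ENNReal.toReal_ofReal (div_nonneg (by linarith) hgpos.le),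
    ENNReal.toReal_ofReal (cfun_nonneg γ h1 w)]
  unfold cfun; ring

private lemma exists_right (γ : StieltjesFunction ℝ) {u b : ℝ} (hub : u < b) {ε : ℝ} (hε : 0 < ε) :
    ∃ v ∈ Ioc u b, γ v - γ u < ε := by
  have h2 : Tendsto γ (𝓝[>] u) (𝓝 (γ u)) :=
    (γ.right_continuous u).tendsto.mono_left (nhdsWithin_mono u Ioi_subset_Ici_self)
  have h3 : ∀ᶠ v in 𝓝[>] u, γ v < γ u + ε :=
    h2.eventually_lt_const (by linarith)
  have h4 : Ioc u b ∈ 𝓝[>] u := Ioc_mem_nhdsGT_of_mem ⟨le_rfl, hub⟩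
  obtain ⟨v, hv1, hv2⟩ := (h3.and (eventually_of_mem h4 fun x hx => hx)).exists
  exact ⟨v, hv2, by linarith⟩

private lemma climb_aux {a b : ℝ} (hab : a ≤ b) (D ω : ℝ → ℝ) (hω : Monotone ω)
    (hleft : ∀ w ∈ Ioc a b, ∀ u : ℕ → ℝ, (∀ n, u n ∈ Ico a w) → Monotone u →
      Tendsto u atTop (𝓝 w) → Tendsto (fun n => D (u n)) atTop (𝓝 (D w)))
    (hstep : ∀ u ∈ Ico a b, ∀ ε > 0, ∃ v ∈ Ioc u b, D v ≤ D u + ε * (ω v - ω u)) :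
    D b ≤ D a := by
  have key : ∀ ε > 0, D b ≤ D a + ε * (ω b - ω a) := by
    intro ε hε
    set S := {v | v ∈ Icc a b ∧ D v ≤ D a + ε * (ω v - ω a)} with hSdef
    have haS : a ∈ S := ⟨⟨le_rfl, hab⟩, by simp⟩
    have hne : S.Nonempty := ⟨a, haS⟩
    have hbdd : BddAbove S := ⟨b, fun x hx => hx.1.2⟩
    set w := sSup S with hw
    have hwa : a ≤ w := le_csSup hbdd haS
    have hwb : w ≤ b := csSup_le hne fun x hx => hx.1.2
    have hwS : w ∈ S := by
      by_cases hmem : w ∈ S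
      · exact hmem
      rcases eq_or_lt_of_le hwa with h | h
      · exact absurd (h ▸ haS) hmem
      obtain ⟨u, hu_mono, hu_tendsto, hu_mem⟩ := exists_seq_tendsto_sSup hne hbdd
      have hu_lt : ∀ n, u n < w := fun n =>
        lt_of_le_of_ne (le_csSup hbdd (hu_mem n)) fun he => hmem (he ▸ hu_mem n)
      have hD := hleft w ⟨h, hwb⟩ u (fun n => ⟨(hu_mem n).1.1, hu_lt n⟩) hu_mono hu_tendsto
      refine ⟨⟨hwa, hwb⟩, ?_⟩
      have hbound : ∀ n, D (u n) ≤ D a + ε * (ω w - ω a) := by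
        intro n
        have h1 : ω (u n) ≤ ω w := hω (hu_lt n).le
        have := (hu_mem n).2
        nlinarith
      exact le_of_tendsto hD (Eventually.of_forall hbound)
    rcases eq_or_lt_of_le hwb with h | h
    · exact h ▸ hwS.2
    obtain ⟨v, hv, hDv⟩ := hstep w ⟨hwa, h⟩ ε hε
    have hvS : v ∈ S := by
      refine ⟨⟨hwa.trans hv.1.le, hv.2⟩, ?_⟩
      have := hwS.2
      nlinarith
    exact absurd (le_csSup hbdd hvS) (not_le.2 hv.1)
  by_contra hlt
  push_neg at hlt
  have hK : 0 ≤ ω b - ω a := sub_nonneg.2 (hω hab)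
  set ε := (D b - D a) / (2 * (ω b - ω a + 1)) with hεdef
  have hε : 0 < ε := div_pos (by linarith) (by linarith)
  have := key ε hε
  have h2 : ε * (ω b - ω a) ≤ (D b - D a) / 2 := by
    rw [hεdef, div_mul_eq_mul_div, div_le_div_iff₀ (by positivity) (by positivity)]
    nlinarith
  linarith

private lemma main_identity (γ : StieltjesFunction ℝ) (h1 : ∀ s, 1 ≤ γ s) (hγ0 : γ 0 = 1)
    {t : ℝ} (ht : 0 ≤ t) :
    Real.log (γ t) = (nu γ (Ioc 0 t)).toReal + (rho γ (Ioc 0 t)).toReal := by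
  set D : ℝ → ℝ := fun v =>
    Real.log (γ v) - (nu γ (Ioc 0 v)).toReal - (rho γ (Ioc 0 v)).toReal with hDdef
  have hadd : ∀ {u v : ℝ}, 0 ≤ u → u ≤ v →
      D v - D u = (Real.log (γ v) - Real.log (γ u))
        - (nu γ (Ioc u v)).toReal - (rho γ (Ioc u v)).toReal := by
    intro u v hu huv
    have hsplit : ∀ μ : Measure ℝ, μ (Ioc 0 v) = μ (Ioc 0 u) + μ (Ioc u v) := fun μ => by
      rw [← Ioc_union_Ioc_eq_Ioc hu huv,
        measure_union (Set.Ioc_disjoint_Ioc_of_le le_rfl) measurableSet_Ioc]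
    have f1 : nu γ (Ioc 0 u) ≠ ⊤ := nu_ne_top γ h1 hu Subset.rfl
    have f2 : nu γ (Ioc u v) ≠ ⊤ := nu_ne_top γ h1 huv Subset.rfl
    have f3 : rho γ (Ioc 0 u) ≠ ⊤ := rho_ne_top γ h1 hu Subset.rfl
    have f4 : rho γ (Ioc u v) ≠ ⊤ := rho_ne_top γ h1 huv Subset.rfl
    have e1 : (nu γ (Ioc 0 v)).toReal = (nu γ (Ioc 0 u)).toReal + (nu γ (Ioc u v)).toReal := by
      rw [hsplit (nu γ), ENNReal.toReal_add f1 f2]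
    have e2 : (rho γ (Ioc 0 v)).toReal = (rho γ (Ioc 0 u)).toReal + (rho γ (Ioc u v)).toReal := by
      rw [hsplit (rho γ), ENNReal.toReal_add f3 f4]
    simp only [hDdef]
    linarith
  have hD0 : D 0 = 0 := by simp [hDdef, hγ0]
  have hleft : ∀ w ∈ Ioc 0 t, ∀ u : ℕ → ℝ, (∀ n, u n ∈ Ico 0 w) → Monotone u →
      Tendsto u atTop (𝓝 w) → Tendsto (fun n => D (u n)) atTop (𝓝 (D w)) := by
    intro w hw u hu_mem hu_mono hu_t
    have hw0 : (0:ℝ) < w := hw.1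
    have hwt : w ≤ t := hw.2
    have hIooIoc : Ioo (0:ℝ) w ⊆ Ioc 0 t :=
      Ioo_subset_Ioc_self.trans (Ioc_subset_Ioc_right hwt)
    have hUnion : (⋃ n, Ioc (0:ℝ) (u n)) = Ioo 0 w := by
      ext x
      simp only [mem_iUnion, mem_Ioc, mem_Ioo]
      constructor
      · rintro ⟨n, hx0, hxu⟩; exact ⟨hx0, lt_of_le_of_lt hxu (hu_mem n).2⟩
      · rintro ⟨hx0, hxw⟩
        obtain ⟨n, hn⟩ := (hu_t.eventually (eventually_gt_nhds hxw)).exists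
        exact ⟨n, hx0, hn.le⟩
    have hmono : Monotone fun n => Ioc (0:ℝ) (u n) := fun m n h =>
      Ioc_subset_Ioc_right (hu_mono h)
    have hfinν : nu γ (Ioo 0 w) ≠ ⊤ := nu_ne_top γ h1 ht hIooIoc
    have hfinρ : rho γ (Ioo 0 w) ≠ ⊤ := rho_ne_top γ h1 ht hIooIoc
    have hν_t : Tendsto (fun n => (nu γ (Ioc 0 (u n))).toReal) atTop
        (𝓝 ((nu γ (Ioo 0 w)).toReal)) := by
      have h := tendsto_measure_iUnion_atTop (μ := nu γ) hmono
      rw [hUnion] at h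
      exact (ENNReal.tendsto_toReal hfinν).comp h
    have hρ_t : Tendsto (fun n => (rho γ (Ioc 0 (u n))).toReal) atTop
        (𝓝 ((rho γ (Ioo 0 w)).toReal)) := by
      have h := tendsto_measure_iUnion_atTop (μ := rho γ) hmono
      rw [hUnion] at h
      exact (ENNReal.tendsto_toReal hfinρ).comp h
    have hu_nw : Tendsto u atTop (𝓝[<] w) :=
      tendsto_nhdsWithin_of_tendsto_nhds_of_eventually_within u hu_t
        (Eventually.of_forall fun n => (hu_mem n).2)
    have hγ_t : Tendsto (fun n => γ (u n)) atTop (𝓝 (Function.leftLim γ w)) :=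
      (γ.mono.tendsto_leftLim w).comp hu_nw
    have hlpos : (0:ℝ) < Function.leftLim γ w :=
      lt_of_lt_of_le one_pos (one_le_leftLim γ h1 w)
    have hlog_t : Tendsto (fun n => Real.log (γ (u n))) atTop
        (𝓝 (Real.log (Function.leftLim γ w))) :=
      ((Real.continuousAt_log hlpos.ne').tendsto).comp hγ_t
    have hlim : Tendsto (fun n => D (u n)) atTop
        (𝓝 (Real.log (Function.leftLim γ w) - (nu γ (Ioo 0 w)).toReal
          - (rho γ (Ioo 0 w)).toReal)) := (hlog_t.sub hν_t).sub hρ_t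
    have hDw : D w = Real.log (Function.leftLim γ w) - (nu γ (Ioo 0 w)).toReal
        - (rho γ (Ioo 0 w)).toReal := by
      have hsplitw : ∀ μ : Measure ℝ, μ (Ioc 0 w) = μ (Ioo 0 w) + μ {w} := fun μ => by
        rw [← Ioo_union_right hw0, measure_union (by simp) (measurableSet_singleton w)]
      have hwIoc : ({w} : Set ℝ) ⊆ Ioc 0 t := by
        intro x hx; rw [mem_singleton_iff] at hx; exact hx ▸ ⟨hw0, hwt⟩
      have f1 : nu γ {w} ≠ ⊤ := nu_ne_top γ h1 ht hwIoc
      have f2 : rho γ {w} ≠ ⊤ := rho_ne_top γ h1 ht hwIoc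
      have e1 : (nu γ (Ioc 0 w)).toReal = (nu γ (Ioo 0 w)).toReal + (nu γ {w}).toReal := by
        rw [hsplitw (nu γ), ENNReal.toReal_add hfinν f1]
      have e2 : (rho γ (Ioc 0 w)).toReal = (rho γ (Ioo 0 w)).toReal + (rho γ {w}).toReal := by
        rw [hsplitw (rho γ), ENNReal.toReal_add hfinρ f2]
      have hatom := atom_identity γ h1 w
      simp only [hDdef]
      linarith
    rw [hDw]
    exact hlim
  have hstep1 : ∀ u ∈ Ico (0:ℝ) t, ∀ ε > 0, ∃ v ∈ Ioc u t, D v ≤ D u + ε * (γ v - γ u) := by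
    intro u hu ε hε
    obtain ⟨v, hv, hsmall⟩ := exists_right γ hu.2 (show (0:ℝ) < min ε 1 by positivity)
    refine ⟨v, hv, ?_⟩
    have huv : u ≤ v := hv.1.le
    have hgu : (0:ℝ) < γ u := lt_of_lt_of_le one_pos (h1 u)
    have hgv : (0:ℝ) < γ v := lt_of_lt_of_le one_pos (h1 v)
    have hmg : γ u ≤ γ v := γ.mono huv
    have hd := hadd hu.1 huv
    have hlog := log_sub_log_le hgu hmg
    have hνge : (γ v - γ u) / γ v ≤ (nu γ (Ioc u v)).toReal := by
      have h := nu_Ioc_ge γ h1 (u := u) (v := v) huv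
      have hfin : nu γ (Ioc u v) ≠ ⊤ := nu_ne_top γ h1 huv Subset.rfl
      calc (γ v - γ u) / γ v
          = (ENNReal.ofReal ((γ v - γ u) / γ v)).toReal :=
            (ENNReal.toReal_ofReal (div_nonneg (by linarith) hgv.le)).symm
        _ ≤ _ := ENNReal.toReal_mono hfin h
    have hρ0 : 0 ≤ (rho γ (Ioc u v)).toReal := ENNReal.toReal_nonneg
    have hsm : γ v - γ u ≤ ε := le_trans hsmall.le (min_le_left _ _)
    have hkey : (γ v - γ u) / γ u - (γ v - γ u) / γ v ≤ ε * (γ v - γ u) := by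
      rw [div_sub_div _ _ hgu.ne' hgv.ne', div_le_iff₀ (by positivity)]
      have h1u : (1:ℝ) ≤ γ u := h1 u
      have h1v : (1:ℝ) ≤ γ v := h1 v
      have hd0 : (0:ℝ) ≤ γ v - γ u := by linarith
      have hgg : (1:ℝ) ≤ γ u * γ v := by nlinarith
      nlinarith [mul_nonneg (sub_nonneg.2 hsm) hd0,
        mul_nonneg (mul_nonneg hε.le hd0) (sub_nonneg.2 hgg)]
    linarith
  have hstep2 : ∀ u ∈ Ico (0:ℝ) t, ∀ ε > 0,
      ∃ v ∈ Ioc u t, -D v ≤ -D u + ε * (γ v - γ u) := by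
    intro u hu ε hε
    obtain ⟨v, hv, hsmall⟩ := exists_right γ hu.2 (show (0:ℝ) < min (ε/2) 1 by positivity)
    refine ⟨v, hv, ?_⟩
    have huv : u ≤ v := hv.1.le
    have hgu : (0:ℝ) < γ u := lt_of_lt_of_le one_pos (h1 u)
    have hgv : (0:ℝ) < γ v := lt_of_lt_of_le one_pos (h1 v)
    have hmg : γ u ≤ γ v := γ.mono huv
    have hd := hadd hu.1 huv
    have hlog := le_log_sub_log hgu hmg
    have hνle : (nu γ (Ioc u v)).toReal ≤ (γ v - γ u) / γ u :=
      ENNReal.toReal_le_of_le_ofReal (div_nonneg (by linarith) hgu.le) (nu_Ioc_le γ h1 huv)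
    have hρle : (rho γ (Ioc u v)).toReal ≤ (γ v - γ u) ^ 2 :=
      ENNReal.toReal_le_of_le_ofReal (sq_nonneg _) (rho_Ioc_le γ h1 huv)
    have hsm : γ v - γ u ≤ ε / 2 := le_trans hsmall.le (min_le_left _ _)
    have hd0 : (0:ℝ) ≤ γ v - γ u := by linarith
    have h1u : (1:ℝ) ≤ γ u := h1 u
    have h1v : (1:ℝ) ≤ γ v := h1 v
    have hkey1 : (γ v - γ u) / γ u - (γ v - γ u) / γ v ≤ (γ v - γ u) ^ 2 := by
      rw [div_sub_div _ _ hgu.ne' hgv.ne', div_le_iff₀ (by positivity)]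
      have hgg : (1:ℝ) ≤ γ u * γ v := by nlinarith
      nlinarith [mul_nonneg (mul_nonneg hd0 hd0) (sub_nonneg.2 hgg)]
    have hkey2 : 2 * (γ v - γ u) ^ 2 ≤ ε * (γ v - γ u) := by
      nlinarith [mul_le_mul_of_nonneg_right hsm hd0]
    linarith
  have h2 := climb_aux ht D γ γ.mono hleft hstep1
  have h3 := climb_aux ht (fun v => -D v) γ γ.mono
    (fun w hw u h h' h'' => (hleft w hw u h h' h'').neg) hstep2
  simp only [neg_le_neg_iff] at h3
  have hDt : D t = 0 := le_antisymm (hD0 ▸ h2) (by simpa [hD0] using h3)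
  simp only [hDdef] at hDt
  linarith



end RpowDoleansAux

/-- Lemma 2.1: for a nondecreasing right-continuous `γ` with `γ ≡ 1` on `(−∞,0]` (so `γ_0 = 1`
and `γ_{0−} = 1`), and every `0 < δ < 1` and `t ≥ 0`,
`γ_t^δ = exp( δ ∫_{(0,t]} γ_s^{−1} dγ^c_s ) · Π_{0<s≤t} (1 − Δγ_s/γ_s)^{−δ}`.
The continuous-part integral is the integral of `γ⁻¹` with respect to the Stieltjes measure of
`γ` over the non-jump points, and the product over the (countably many) jump times is written as
the exponential of `−δ` times the sum of the logarithms `log(1 − Δγ_s/γ_s)`. -/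
theorem rpow_eq_doleans_exponential (γ : StieltjesFunction ℝ)
    (hγflat : ∀ t : ℝ, t ≤ 0 → γ t = 1)
    (δ : ℝ) (hδ0 : 0 < δ) (hδ1 : δ < 1) (t : ℝ) (ht : 0 ≤ t) :
    γ t ^ δ =
      Real.exp (δ * ∫ s in Ioc 0 t ∩ {s | Function.leftLim γ s = γ s}, (γ s)⁻¹ ∂γ.measure) *
        Real.exp (-δ * ∑' s : ↥(Ioc 0 t ∩ {s | Function.leftLim γ s ≠ γ s}),
          Real.log (1 - (γ s.1 - Function.leftLim γ s.1) / γ s.1)) := by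
  have hγ0 : γ 0 = 1 := hγflat 0 le_rfl
  have h1 : ∀ s, 1 ≤ γ s := by
    intro s
    rcases le_or_gt s 0 with h | h
    · exact (hγflat s h).ge
    · exact hγ0 ▸ γ.mono h.le
  have hgt : (0:ℝ) < γ t := lt_of_lt_of_le one_pos (h1 t)
  have hJset : {s : ℝ | Function.leftLim γ s ≠ γ s} = jumpSet γ := rfl
  rw [hJset]
  set A := Ioc (0:ℝ) t with hAdef
  have hAm : MeasurableSet A := measurableSet_Ioc
  have hJm : MeasurableSet (jumpSet γ) := (jumpSet_countable γ).measurableSet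
  have hJAc : (A ∩ jumpSet γ).Countable := (jumpSet_countable γ).mono inter_subset_right
  have hCset : A ∩ {s | Function.leftLim γ s = γ s} = A \ jumpSet γ := by
    ext x
    simp only [mem_inter_iff, mem_setOf_eq, mem_diff, jumpSet, not_ne_iff]
  -- the integral
  have hInt : ∫ s in A ∩ {s : ℝ | Function.leftLim γ s = γ s}, (γ s)⁻¹ ∂γ.measure
      = (nu γ (A \ jumpSet γ)).toReal := by
    rw [hCset]
    have hm : MeasurableSet (A \ jumpSet γ) := hAm.diff hJm
    rw [integral_eq_lintegral_of_nonneg_ae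
        (Eventually.of_forall fun s => inv_nonneg.2 (lt_of_lt_of_le one_pos (h1 s)).le)
        (γ.mono.measurable.inv.aestronglyMeasurable), nu_apply γ hm]
  -- finiteness
  have hsubA : ∀ {E : Set ℝ}, E ⊆ A → nu γ E ≠ ⊤ := fun hE => nu_ne_top γ h1 ht hE
  have hρAfin : rho γ A ≠ ⊤ := rho_ne_top γ h1 ht Subset.rfl
  -- nu split
  have hνsplit : (nu γ A).toReal
      = (nu γ (A \ jumpSet γ)).toReal + (nu γ (A ∩ jumpSet γ)).toReal := by
    have h := measure_inter_add_diff (μ := nu γ) A hJm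
    rw [← h, ENNReal.toReal_add (hsubA inter_subset_left) (hsubA diff_subset)]
    ring
  -- atoms of nu on the jump set
  have hFnn : ∀ x : ℝ, 0 ≤ (γ x - Function.leftLim γ x) / γ x := fun x =>
    div_nonneg (sub_nonneg.2 (leftLim_le_self γ x)) (lt_of_lt_of_le one_pos (h1 x)).le
  have hνJ : nu γ (A ∩ jumpSet γ)
      = ∑' x : ↥(A ∩ jumpSet γ), ENNReal.ofReal ((γ x - Function.leftLim γ x) / γ x) := by
    rw [measure_countable_eq_tsum (nu γ) hJAc]
    exact tsum_congr fun x => nu_singleton γ h1 x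
  have hρA : rho γ A = ∑' x : ↥(A ∩ jumpSet γ), ENNReal.ofReal (cfun γ x) := by
    rw [rho_apply γ hAm, Set.inter_comm]
  -- real tsums
  have hν_tsumR : (∑' x : ↥(A ∩ jumpSet γ), (γ x - Function.leftLim γ x) / γ x)
      = (nu γ (A ∩ jumpSet γ)).toReal := by
    rw [hνJ, ENNReal.tsum_toReal_eq fun a => ENNReal.ofReal_ne_top]
    exact tsum_congr fun x => (ENNReal.toReal_ofReal (hFnn x)).symm
  have hρ_tsumR : (∑' x : ↥(A ∩ jumpSet γ), cfun γ x) = (rho γ A).toReal := by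
    rw [hρA, ENNReal.tsum_toReal_eq fun a => ENNReal.ofReal_ne_top]
    exact tsum_congr fun x => (ENNReal.toReal_ofReal (cfun_nonneg γ h1 x)).symm
  have hSummF : Summable fun x : ↥(A ∩ jumpSet γ) => (γ x - Function.leftLim γ x) / γ x := by
    have h := ENNReal.summable_toReal (hνJ ▸ hsubA inter_subset_left)
    exact h.congr fun x => ENNReal.toReal_ofReal (hFnn x)
  have hSummC : Summable fun x : ↥(A ∩ jumpSet γ) => cfun γ x := by
    have h := ENNReal.summable_toReal (hρA ▸ hρAfin)
    exact h.congr fun x => ENNReal.toReal_ofReal (cfun_nonneg γ h1 x)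
  -- the statement's sum
  have hT : (∑' s : ↥(A ∩ jumpSet γ),
        Real.log (1 - (γ s.1 - Function.leftLim γ s.1) / γ s.1))
      = -((nu γ (A ∩ jumpSet γ)).toReal + (rho γ A).toReal) := by
    have hterm : ∀ s : ↥(A ∩ jumpSet γ),
        Real.log (1 - (γ s.1 - Function.leftLim γ s.1) / γ s.1)
          = -((γ s.1 - Function.leftLim γ s.1) / γ s.1 + cfun γ s.1) := by
      intro s
      have hg : (0:ℝ) < γ s.1 := lt_of_lt_of_le one_pos (h1 s.1)
      have hl : (0:ℝ) < Function.leftLim γ s.1 :=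
        lt_of_lt_of_le one_pos (one_le_leftLim γ h1 s.1)
      have h2 : 1 - (γ s.1 - Function.leftLim γ s.1) / γ s.1
          = Function.leftLim γ s.1 / γ s.1 := by field_simp; ring
      rw [h2, Real.log_div hl.ne' hg.ne']
      unfold cfun
      ring
    rw [tsum_congr hterm, tsum_neg, Summable.tsum_add hSummF hSummC, hν_tsumR, hρ_tsumR]
  rw [hInt, hT]
  have hMain := main_identity γ h1 hγ0 ht
  rw [Real.rpow_def_of_pos hgt, ← Real.exp_add]
  congr 1
  rw [hMain, hνsplit]
  ring
end

section
/- Let B: [0,∞) → [0,∞) be a continuous nondecreasing function with B_0 = 0 and let Λ: [0,∞) → ℝ be a nondecreasing right-continuous function. Then for every t ≥ 0: ∫₀ᵗ (B_t − B_s)² dΛ_s = 2 ∫₀ᵗ ( ∫₀ˢ (Λ_u − Λ_0) dB_u ) dB_s, where dΛ_s denotes the Lebesgue–Stieltjes measure of Λ on (0,t]. -/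
open MeasureTheory Set Filter Topology

open scoped ENNReal

set_option linter.unusedVariables false

private lemma sf_leftLim_eq (B : StieltjesFunction ℝ) (hBc : Continuous fun x => B x) (x : ℝ) :
    Function.leftLim (⇑B) x = B x :=
  leftLim_eq_of_tendsto
    ((hBc.tendsto x).mono_left nhdsWithin_le_nhds)

private lemma sf_noAtoms (B : StieltjesFunction ℝ) (hBc : Continuous fun x => B x) :
    NoAtoms B.measure :=
  ⟨fun x => by rw [B.measure_singleton, sf_leftLim_eq B hBc, sub_self, ENNReal.ofReal_zero]⟩

private lemma sf_measure_Icc (B : StieltjesFunction ℝ) (hBc : Continuous fun x => B x) (a b : ℝ) :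
    B.measure (Icc a b) = ENNReal.ofReal (B b - B a) := by
  rw [B.measure_Icc, sf_leftLim_eq B hBc]

private lemma swap_lemma (μ ν : Measure ℝ) [SigmaFinite μ] [SigmaFinite ν]
    {E : Set (ℝ × ℝ)} (hE : MeasurableSet E) {g : ℝ → ℝ≥0∞} (hg : Measurable g) :
    ∫⁻ s, ∫⁻ v, E.indicator (fun _ => (1:ℝ≥0∞)) (s, v) * g v ∂ν ∂μ
      = ∫⁻ v, g v * μ {s | (s, v) ∈ E} ∂ν := by
  rw [lintegral_lintegral_swap]
  · refine lintegral_congr fun v => ?_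
    have h1 : ∀ s : ℝ, E.indicator (fun _ => (1:ℝ≥0∞)) (s, v) * g v
        = {s | (s, v) ∈ E}.indicator (fun _ => g v) s := by
      intro s
      by_cases h : (s, v) ∈ E <;> simp [Set.indicator_of_mem, Set.indicator_of_notMem, h]
    simp_rw [h1]
    exact lintegral_indicator_const (hE.preimage (measurable_prodMk_right)) _
  · exact ((measurable_const.indicator hE).mul (hg.comp measurable_snd)).aemeasurable

private lemma keyA (B : StieltjesFunction ℝ) (hBc : Continuous fun x => B x)
    {s t : ℝ} (hst : s ≤ t) :
    2 * ∫⁻ u in Ioc s t, ENNReal.ofReal (B t - B u) ∂B.measure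
      = ENNReal.ofReal ((B t - B s) ^ 2) := by
  set μ := B.measure with hμ
  haveI hna : NullSingletonClass μ := sf_noAtoms B hBc
  set A : Set (ℝ × ℝ) := {p | p.1 ∈ Ioc s t ∧ p.2 ∈ Ioc p.1 t} with hA
  set A' : Set (ℝ × ℝ) := {p | p.2 ∈ Ioc s t ∧ p.1 ∈ Ioc p.2 t} with hA'
  have hmeas : MeasurableSet A := by
    apply MeasurableSet.inter
    · exact measurable_fst measurableSet_Ioc
    exact MeasurableSet.inter (measurableSet_lt measurable_fst measurable_snd)
      (measurable_snd measurableSet_Iic)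
  have hmeas' : MeasurableSet A' := by
    apply MeasurableSet.inter
    · exact measurable_snd measurableSet_Ioc
    exact MeasurableSet.inter (measurableSet_lt measurable_snd measurable_fst)
      (measurable_fst measurableSet_Iic)
  -- the integral equals the product measure of A
  have h1 : ∫⁻ u in Ioc s t, ENNReal.ofReal (B t - B u) ∂μ = μ.prod μ A := by
    rw [Measure.prod_apply hmeas, ← lintegral_indicator measurableSet_Ioc]
    refine lintegral_congr fun u => ?_
    by_cases hu : u ∈ Ioc s t
    · have : Prod.mk u ⁻¹' A = Ioc u t := by
        rw [Set.mem_Ioc] at hu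
        ext v
        simp only [Set.mem_preimage, hA, Set.mem_setOf_eq, Set.mem_Ioc]
        tauto
      rw [Set.indicator_of_mem hu, this, B.measure_Ioc]
    · have : Prod.mk u ⁻¹' A = ∅ := by
        rw [Set.mem_Ioc, not_and_or, not_lt, not_le] at hu
        ext v
        simp only [Set.mem_preimage, hA, Set.mem_setOf_eq, Set.mem_Ioc,
          Set.mem_empty_iff_false, iff_false, not_and]
        rcases hu with h | h
        · intro hc; exact absurd (hc.1) (not_lt.2 h)
        · intro hc; exact absurd (hc.2) (not_le.2 h)
      rw [Set.indicator_of_notMem hu, this, measure_empty]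
  -- symmetry
  have hswap : A' = Prod.swap ⁻¹' A := by
    ext p; simp [hA, hA', and_comm]
  have h2 : μ.prod μ A' = μ.prod μ A := by
    rw [hswap, ← Measure.map_apply measurable_swap hmeas, Measure.prod_swap]
  -- diagonal is null
  have hdiagm : MeasurableSet {p : ℝ × ℝ | p.1 = p.2} :=
    measurableSet_eq_fun measurable_fst measurable_snd
  have hdiag : μ.prod μ {p : ℝ × ℝ | p.1 = p.2} = 0 := by
    rw [Measure.prod_apply hdiagm]
    have : ∀ x : ℝ, μ (Prod.mk x ⁻¹' {p : ℝ × ℝ | p.1 = p.2}) = 0 := by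
      intro x
      have : Prod.mk x ⁻¹' {p : ℝ × ℝ | p.1 = p.2} = {x} := by
        ext y; simp [eq_comm]
      rw [this, measure_singleton]
    simp [this]
  -- decomposition of the square
  have hsub : (Ioc s t ×ˢ Ioc s t : Set (ℝ × ℝ)) ⊆ (A ∪ A') ∪ {p | p.1 = p.2} := by
    rintro ⟨u, v⟩ ⟨hu, hv⟩
    rcases lt_trichotomy u v with h | h | h
    · exact Or.inl (Or.inl ⟨hu, h, hv.2⟩)
    · exact Or.inr h
    · exact Or.inl (Or.inr ⟨hv, h, hu.2⟩)
  have hsub2 : A ∪ A' ⊆ (Ioc s t ×ˢ Ioc s t : Set (ℝ × ℝ)) := by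
    rintro ⟨u, v⟩ (⟨hu, hv⟩ | ⟨hv, hu⟩)
    · exact ⟨hu, hu.1.trans hv.1, hv.2⟩
    · exact ⟨⟨hv.1.trans hu.1, hu.2⟩, hv⟩
  have hdisj : Disjoint A A' := by
    rw [Set.disjoint_left]
    rintro ⟨u, v⟩ ⟨_, hv⟩ ⟨_, hu⟩
    exact absurd (hv.1.trans hu.1) (lt_irrefl u)
  have hsq : μ.prod μ (Ioc s t ×ˢ Ioc s t) = μ.prod μ A + μ.prod μ A' := by
    apply le_antisymm
    · calc μ.prod μ (Ioc s t ×ˢ Ioc s t) ≤ μ.prod μ ((A ∪ A') ∪ {p | p.1 = p.2}) :=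
            measure_mono hsub
        _ ≤ μ.prod μ (A ∪ A') + μ.prod μ {p | p.1 = p.2} := measure_union_le _ _
        _ = μ.prod μ (A ∪ A') := by rw [hdiag, add_zero]
        _ ≤ μ.prod μ A + μ.prod μ A' := measure_union_le _ _
    · rw [← measure_union hdisj hmeas']
      exact measure_mono hsub2
  have hBst : 0 ≤ B t - B s := sub_nonneg.2 (B.mono hst)
  rw [h1, two_mul]
  nth_rewrite 2 [← h2]
  rw [← hsq, Measure.prod_prod, B.measure_Ioc, ← ENNReal.ofReal_mul hBst, sq]

private lemma lint_double_eq (μ ν : Measure ℝ) [SigmaFinite μ] [SigmaFinite ν]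
    {t : ℝ} {I : ℝ → Set ℝ} (hI : ∀ s, MeasurableSet (I s)) {E : Set (ℝ × ℝ)}
    (hE : MeasurableSet E)
    (hEdef : ∀ p : ℝ × ℝ, p ∈ E ↔ p.1 ∈ Ioc 0 t ∧ p.2 ∈ I p.1)
    {g : ℝ → ℝ≥0∞} (hg : Measurable g) :
    ∫⁻ s in Ioc 0 t, ∫⁻ v in I s, g v ∂ν ∂μ = ∫⁻ v, g v * μ {s | (s, v) ∈ E} ∂ν := by
  rw [← swap_lemma μ ν hE hg, ← lintegral_indicator measurableSet_Ioc]
  refine lintegral_congr fun s => ?_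
  by_cases hs : s ∈ Ioc 0 t
  · rw [Set.indicator_of_mem hs, ← lintegral_indicator (hI s)]
    refine lintegral_congr fun v => ?_
    by_cases hv : v ∈ I s
    · rw [Set.indicator_of_mem hv, Set.indicator_of_mem ((hEdef (s, v)).2 ⟨hs, hv⟩), one_mul]
    · rw [Set.indicator_of_notMem hv,
        Set.indicator_of_notMem (fun h => hv ((hEdef (s, v)).1 h).2), zero_mul]
  · rw [Set.indicator_of_notMem hs]
    symm
    have : ∀ v : ℝ, E.indicator (fun _ => (1:ℝ≥0∞)) (s, v) * g v = 0 := fun v => by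
      rw [Set.indicator_of_notMem (fun h => hs ((hEdef (s, v)).1 h).1), zero_mul]
    simp only [this, lintegral_zero]


/-- Fubini-type identity (Eq. (2.7) of Section 3): for `B` continuous nondecreasing with
`B_0 = 0` and `Λ` nondecreasing right-continuous,
`∫₀ᵗ (B_t − B_s)² dΛ_s = 2 ∫₀ᵗ ( ∫₀ˢ (Λ_u − Λ_0) dB_u ) dB_s`. -/
theorem stieltjes_fubini_identity (B Λ : StieltjesFunction ℝ)
    (hBc : Continuous fun x => B x) (hB0 : B 0 = 0)
    (t : ℝ) (ht : 0 ≤ t) :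
    ∫ s in Ioc 0 t, (B t - B s) ^ 2 ∂Λ.measure =
      2 * ∫ s in Ioc 0 t, (∫ u in Ioc 0 s, (Λ u - Λ 0) ∂B.measure) ∂B.measure := by
  set μ := B.measure with hμdef
  set ν := Λ.measure with hνdef
  haveI : NullSingletonClass μ := sf_noAtoms B hBc
  have hΛm : Measurable fun v : ℝ => ENNReal.ofReal (Λ v - Λ 0) :=
    ENNReal.measurable_ofReal.comp (Λ.mono.measurable.sub measurable_const)
  have hBm : Measurable fun u : ℝ => ENNReal.ofReal (B t - B u) :=
    ENNReal.measurable_ofReal.comp (measurable_const.sub B.mono.measurable)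
  set E1 : Set (ℝ × ℝ) := {p | p.1 ∈ Ioc 0 t ∧ p.2 ∈ Ioc 0 p.1} with hE1def
  set E2 : Set (ℝ × ℝ) := {p | p.1 ∈ Ioc 0 t ∧ p.2 ∈ Ioc p.1 t} with hE2def
  have hE1 : MeasurableSet E1 :=
    (measurable_fst measurableSet_Ioc).inter
      ((measurableSet_lt measurable_const measurable_snd).inter
        (measurableSet_le measurable_snd measurable_fst))
  have hE2 : MeasurableSet E2 :=
    (measurable_fst measurableSet_Ioc).inter
      ((measurableSet_lt measurable_fst measurable_snd).inter
        (measurable_snd measurableSet_Iic))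
  set K : ℝ≥0∞ := ∫⁻ u in Ioc 0 t, ENNReal.ofReal (Λ u - Λ 0) * ENNReal.ofReal (B t - B u) ∂μ
    with hKdef
  -- the right-hand side, in lintegral form
  have hR : ∫⁻ s in Ioc 0 t, ∫⁻ u in Ioc 0 s, ENNReal.ofReal (Λ u - Λ 0) ∂μ ∂μ = K := by
    rw [lint_double_eq μ μ (I := fun s => Ioc 0 s) (fun s => measurableSet_Ioc) hE1 (fun p => Iff.rfl) hΛm,
      hKdef, ← lintegral_indicator measurableSet_Ioc]
    refine lintegral_congr fun v => ?_
    by_cases hv : v ∈ Ioc 0 t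
    · have hsec : {s : ℝ | (s, v) ∈ E1} = Icc v t := by
        rw [Set.mem_Ioc] at hv
        ext x
        simp only [hE1def, Set.mem_setOf_eq, Set.mem_Ioc, Set.mem_Icc]
        constructor
        · rintro ⟨⟨_, h2⟩, _, h4⟩; exact ⟨h4, h2⟩
        · rintro ⟨h1, h2⟩; exact ⟨⟨lt_of_lt_of_le hv.1 h1, h2⟩, hv.1, h1⟩
      rw [hsec, Set.indicator_of_mem hv, sf_measure_Icc B hBc]
    · have hsec : {s : ℝ | (s, v) ∈ E1} = ∅ := by
        rw [Set.mem_Ioc, not_and_or, not_lt, not_le] at hv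
        ext x
        simp only [hE1def, Set.mem_setOf_eq, Set.mem_Ioc, Set.mem_empty_iff_false, iff_false]
        rcases hv with h | h
        · rintro ⟨_, h3, _⟩; exact absurd (h3.trans_le h) (lt_irrefl 0)
        · rintro ⟨⟨_, h2⟩, _, h4⟩; exact absurd (h.trans_le (h4.trans h2)) (lt_irrefl t)
      rw [hsec, Set.indicator_of_notMem hv, measure_empty, mul_zero]
  -- the left-hand side, in lintegral form
  have hL : ∫⁻ s in Ioc 0 t, ENNReal.ofReal ((B t - B s) ^ 2) ∂ν = 2 * K := by
    have step1 : ∀ s ∈ Ioc 0 t,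
        ENNReal.ofReal ((B t - B s) ^ 2)
          = 2 * ∫⁻ u in Ioc s t, ENNReal.ofReal (B t - B u) ∂μ :=
      fun s hs => (keyA B hBc hs.2).symm
    rw [setLIntegral_congr_fun measurableSet_Ioc step1,
      lintegral_const_mul' 2 _ (by norm_num)]
    congr 1
    rw [lint_double_eq ν μ (I := fun s => Ioc s t) (fun s => measurableSet_Ioc) hE2 (fun p => Iff.rfl) hBm,
      hKdef, ← lintegral_indicator measurableSet_Ioc]
    have hae : ∀ᵐ u ∂μ, Function.leftLim (⇑Λ) u = Λ u := by
      rw [ae_iff]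
      exact measure_mono_null (fun x hx => hx) (Λ.countable_leftLim_ne.measure_zero μ)
    refine lintegral_congr_ae ?_
    filter_upwards [hae] with u hu
    by_cases hv : u ∈ Ioc 0 t
    · have hsec : {s : ℝ | (s, u) ∈ E2} = Ioo 0 u := by
        rw [Set.mem_Ioc] at hv
        ext x
        simp only [hE2def, Set.mem_setOf_eq, Set.mem_Ioc, Set.mem_Ioo]
        constructor
        · rintro ⟨⟨h1, _⟩, h3, _⟩; exact ⟨h1, h3⟩
        · rintro ⟨h1, h2⟩; exact ⟨⟨h1, (le_of_lt h2).trans hv.2⟩, h2, hv.2⟩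
      rw [hsec, Λ.measure_Ioo, hu, Set.indicator_of_mem hv, mul_comm]
    · have hsec : {s : ℝ | (s, u) ∈ E2} = ∅ := by
        rw [Set.mem_Ioc, not_and_or, not_lt, not_le] at hv
        ext x
        simp only [hE2def, Set.mem_setOf_eq, Set.mem_Ioc, Set.mem_empty_iff_false, iff_false]
        rcases hv with h | h
        · rintro ⟨⟨h1, _⟩, h3, _⟩; exact absurd ((h1.trans h3).trans_le h) (lt_irrefl 0)
        · rintro ⟨_, _, h4⟩; exact absurd (h.trans_le h4) (lt_irrefl t)
      rw [hsec, Set.indicator_of_notMem hv, measure_empty, mul_zero]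
  -- convert Bochner integrals to lintegrals
  have hLconv : ∫ s in Ioc 0 t, (B t - B s) ^ 2 ∂ν
      = (∫⁻ s in Ioc 0 t, ENNReal.ofReal ((B t - B s) ^ 2) ∂ν).toReal := by
    rw [integral_eq_lintegral_of_nonneg_ae (f := fun s => (B t - B s) ^ 2) (ae_of_all _ fun s => sq_nonneg _)
      ((continuous_const.sub hBc).pow 2).aestronglyMeasurable]
  set G : ℝ → ℝ≥0∞ := fun s => ∫⁻ u in Ioc 0 s, ENNReal.ofReal (Λ u - Λ 0) ∂μ with hGdef
  have hinner : ∀ s : ℝ, ∫ u in Ioc 0 s, (Λ u - Λ 0) ∂μ = (G s).toReal := by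
    intro s
    rw [integral_eq_lintegral_of_nonneg_ae
      ((ae_restrict_iff' measurableSet_Ioc).2
        (ae_of_all _ fun u hu => sub_nonneg.2 (Λ.mono hu.1.le)))
      (Λ.mono.measurable.sub measurable_const).aestronglyMeasurable]
  have hG_mono : Monotone G := fun a b hab => lintegral_mono_set (Ioc_subset_Ioc_right hab)
  have hG_fin : ∀ s ≤ t, G s ≠ ⊤ := by
    intro s hs
    have h1 : G s ≤ ENNReal.ofReal (Λ t - Λ 0) * μ (Ioc 0 t) := by
      calc G s ≤ G t := hG_mono hs
        _ ≤ ∫⁻ _ in Ioc 0 t, ENNReal.ofReal (Λ t - Λ 0) ∂μ :=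
            setLIntegral_mono measurable_const fun u hu =>
              ENNReal.ofReal_le_ofReal (sub_le_sub_right (Λ.mono hu.2) _)
        _ = ENNReal.ofReal (Λ t - Λ 0) * μ (Ioc 0 t) := setLIntegral_const _ _
    refine (h1.trans_lt ?_).ne
    rw [hμdef, B.measure_Ioc]
    exact ENNReal.mul_lt_top ENNReal.ofReal_lt_top ENNReal.ofReal_lt_top
  have hRconv : ∫ s in Ioc 0 t, (∫ u in Ioc 0 s, (Λ u - Λ 0) ∂μ) ∂μ
      = (∫⁻ s in Ioc 0 t, G s ∂μ).toReal := by
    simp_rw [hinner]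
    rw [integral_eq_lintegral_of_nonneg_ae (ae_of_all _ fun s => ENNReal.toReal_nonneg)
      (ENNReal.measurable_toReal.comp hG_mono.measurable).aestronglyMeasurable]
    congr 1
    refine setLIntegral_congr_fun measurableSet_Ioc (fun s hs => ?_)
    exact ENNReal.ofReal_toReal (hG_fin s hs.2)
  rw [hLconv, hL, hRconv, hR, ENNReal.toReal_mul]
  norm_num
end

section
/- Let B: [0,∞) → [0,∞) be a continuous nondecreasing function with B_0 = 0 and Λ: [0,∞) → ℝ a nondecreasing right-continuous function with Λ_t → ∞ as t → ∞. Define B̃_t = ∫₀ᵗ (B_t − B_s)² dΛ_s. Assume ∫₀^∞ (Λ_s − Λ_0) dB_s = ∞ and B̃_t → ∞ as t → ∞. Then B_t² / B̃_t → 0 as t → ∞. -/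
open MeasureTheory Set Filter Topology

/-- Deterministic part of the proof of Proposition 3.1: with `B` continuous nondecreasing,
`B_0 = 0`, `Λ` nondecreasing right-continuous with `Λ_t → ∞`,
`B̃_t = ∫₀ᵗ (B_t − B_s)² dΛ_s`, if `∫₀^∞ (Λ_s − Λ_0) dB_s = ∞` and `B̃_t → ∞`, then
`B_t² / B̃_t → 0` as `t → ∞`. -/
theorem sq_div_Btilde_tendsto_zero (B Λ : StieltjesFunction ℝ)
    (hBc : Continuous fun x => B x) (hB0 : B 0 = 0)
    (hΛtop : Tendsto (fun t => Λ t) atTop atTop)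
    (hint : (∫⁻ s in Ioi (0 : ℝ), ENNReal.ofReal (Λ s - Λ 0) ∂B.measure) = ⊤)
    (hBtilde : Tendsto (fun t => ∫ s in Ioc 0 t, (B t - B s) ^ 2 ∂Λ.measure) atTop atTop) :
    Tendsto (fun t => B t ^ 2 / ∫ s in Ioc 0 t, (B t - B s) ^ 2 ∂Λ.measure)
      atTop (𝓝 0) := by
  set F : ℝ → ℝ := fun t => ∫ s in Ioc 0 t, (B t - B s) ^ 2 ∂Λ.measure with hFdef
  have hBmono : Monotone (B : ℝ → ℝ) := B.mono
  have hΛmono : Monotone (Λ : ℝ → ℝ) := Λ.mono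
  have hFnonneg : ∀ t, 0 ≤ F t := fun t =>
    setIntegral_nonneg measurableSet_Ioc (fun s _ => sq_nonneg _)
  have hfnonneg : ∀ t, 0 ≤ B t ^ 2 / F t := fun t => div_nonneg (sq_nonneg _) (hFnonneg t)
  have hInt : ∀ t, IntegrableOn (fun s => (B t - B s) ^ 2) (Ioc 0 t) Λ.measure := by
    intro t
    refine IntegrableOn.mono_set ?_ Ioc_subset_Icc_self
    exact ((continuous_const.sub hBc).pow 2).integrableOn_Icc
  have key : ∀ T t, 0 < T → T ≤ t → (Λ T - Λ 0) * (B t - B T) ^ 2 ≤ F t := by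
    intro T t hT hTt
    have hΛT : (0:ℝ) ≤ Λ T - Λ 0 := sub_nonneg.2 (hΛmono hT.le)
    have h1 : (Λ T - Λ 0) * (B t - B T) ^ 2
        = ∫ _ in Ioc 0 T, (B t - B T) ^ 2 ∂Λ.measure := by
      rw [setIntegral_const, measureReal_def, Λ.measure_Ioc, ENNReal.toReal_ofReal hΛT, smul_eq_mul]
    rw [h1]
    have hIntT : IntegrableOn (fun s => (B t - B s) ^ 2) (Ioc 0 T) Λ.measure :=
      (hInt t).mono_set (Ioc_subset_Ioc_right hTt)
    have hconst : IntegrableOn (fun _ => (B t - B T) ^ 2) (Ioc 0 T) Λ.measure := by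
      refine (integrableOn_const_iff (by finiteness)).2 (Or.inr ?_)
      rw [Λ.measure_Ioc]; exact ENNReal.ofReal_lt_top
    refine le_trans (setIntegral_mono_on hconst hIntT measurableSet_Ioc ?_) ?_
    · intro s hs
      exact pow_le_pow_left₀ (sub_nonneg.2 (hBmono hTt))
        (by linarith [hBmono hs.2]) 2
    · refine setIntegral_mono_set (hInt t) (Eventually.of_forall fun s => sq_nonneg _) ?_
      exact HasSubset.Subset.eventuallyLE (Ioc_subset_Ioc_right hTt)
  rcases tendsto_of_monotone hBmono with hBtop | ⟨c, hc⟩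
  · rw [Metric.tendsto_nhds]
    intro ε hε
    have hε2 : 0 < ε / 2 := half_pos hε
    obtain ⟨T, hT1, hTΛ⟩ : ∃ T, 1 ≤ T ∧ Λ 0 + 2 / (ε / 2) ≤ Λ T := by
      rcases ((hΛtop.eventually_ge_atTop (Λ 0 + 2 / (ε / 2))).and
        (eventually_ge_atTop 1)).exists with ⟨T, h1, h2⟩
      exact ⟨T, h2, h1⟩
    have hT0 : (0:ℝ) < T := lt_of_lt_of_le one_pos hT1
    have hBT0 : 0 ≤ B T := hB0 ▸ hBmono hT0.le
    filter_upwards [hBtop.eventually_ge_atTop (4 * B T + 1), eventually_ge_atTop T]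
      with t hBt hTt
    have hBt1 : 1 ≤ B t := by linarith
    have hsq : (1 / 2) * B t ^ 2 ≤ (B t - B T) ^ 2 := by nlinarith
    have hΛ' : 2 / (ε / 2) ≤ Λ T - Λ 0 := by linarith
    have hprod : 2 / (ε / 2) * ((1 / 2) * B t ^ 2) ≤ (Λ T - Λ 0) * (B t - B T) ^ 2 :=
      mul_le_mul hΛ' hsq (by positivity) (le_trans (by positivity) hΛ')
    have hK : B t ^ 2 / (ε / 2) ≤ F t := by
      have h2 := key T t hT0 hTt
      have : 2 / (ε / 2) * ((1 / 2) * B t ^ 2) = B t ^ 2 / (ε / 2) := by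
        field_simp
      linarith [this ▸ hprod]
    have hFpos : 0 < F t := lt_of_lt_of_le (by positivity) hK
    have hle : B t ^ 2 / F t ≤ ε / 2 := by
      rw [div_le_iff₀ hFpos]
      have h3 := (div_le_iff₀ hε2).mp hK
      linarith
    rw [Real.dist_eq, sub_zero, abs_of_nonneg (hfnonneg t)]
    linarith
  · have hle : ∀ t, B t ≤ c := fun t => hBmono.ge_of_tendsto hc t
    refine tendsto_of_tendsto_of_tendsto_of_le_of_le'
      (tendsto_const_nhds (x := (0:ℝ))) ((tendsto_const_nhds (x := c ^ 2)).div_atTop hBtilde)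
      (Eventually.of_forall hfnonneg) ?_
    filter_upwards [hBtilde.eventually_gt_atTop 0, eventually_ge_atTop (0:ℝ)] with t hFt ht
    have hB0t : 0 ≤ B t := hB0 ▸ hBmono ht
    have : B t ^ 2 ≤ c ^ 2 := pow_le_pow_left₀ hB0t (hle t) 2
    gcongr
end
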